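/- arXiv:2012.15457 — 3 statements merged into one kernel-verified Lean document; each statement's English description precedes it below -/
import Mathlib

section
/- Let f_0,...,f_{m-1} be continuous self-maps of a compact metric space (X,d) and φ continuous on X. Then lim_{r→0} P^s_r(f_0,...,f_{m-1},φ) = P(f_0,...,f_{m-1},φ), where P^s_r is the topological r-pressure defined via separated sets. -/
open Filter Topology

section FSG

variable {X : Type*}

/-- Apply the maps of the free semigroup action along a word; the first letter of the
list is applied first. -/
def fw {ι : Type*} (f : ι → X → X) (w : List ι) (x : X) : X :=
  w.foldl (fun y a => f a y) x

/-- The Birkhoff-type sum `(S_w φ)(x) = ∑_{w' ≤ w} φ(f_{w'} x)`. -/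
noncomputable def Sw {ι : Type*} (f : ι → X → X) (φ : X → ℝ) (w : List ι) (x : X) : ℝ :=
  ∑ i ∈ Finset.range w.length, φ (fw f (w.take i) x)

variable [MetricSpace X]

/-- `F` is a `(w, ε, r)`-spanning set for the free semigroup action. -/
def rSpan {ι : Type*} (f : ι → X → X) (w : List ι) (ε r : ℝ) (F : Finset X) : Prop :=
  ∀ x : X, ∃ y ∈ F, (1 - r) * w.length <
    (((Finset.range w.length).filter
      (fun i => dist (fw f (w.take i) x) (fw f (w.take i) y) < ε)).card : ℝ)

/-- `E` is a `(w, ε, r)`-separated set for the free semigroup action. -/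
def rSep {ι : Type*} (f : ι → X → X) (w : List ι) (ε r : ℝ) (E : Finset X) : Prop :=
  ∀ x ∈ E, ∀ y ∈ E, x ≠ y → r * w.length <
    (((Finset.range w.length).filter
      (fun i => ε ≤ dist (fw f (w.take i) x) (fw f (w.take i) y))).card : ℝ)

/-- `Q_w(f_0,…,f_{m-1},φ,ε,r)` (spanning-set version). -/
noncomputable def Qw {ι : Type*} (f : ι → X → X) (φ : X → ℝ) (w : List ι) (ε r : ℝ) : ℝ :=
  sInf {s : ℝ | ∃ F : Finset X, rSpan f w ε r F ∧ s = ∑ x ∈ F, Real.exp (Sw f φ w x)}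

/-- `Q_w^s(f_0,…,f_{m-1},φ,ε,r)` (separated-set version). -/
noncomputable def Qws {ι : Type*} (f : ι → X → X) (φ : X → ℝ) (w : List ι) (ε r : ℝ) : ℝ :=
  sSup {s : ℝ | ∃ E : Finset X, rSep f w ε r E ∧ s = ∑ x ∈ E, Real.exp (Sw f φ w x)}

/-- `Q_n(f_0,…,f_{m-1},φ,ε,r) = (1/m^n) ∑_{|w|=n} Q_w`. -/
noncomputable def Qn {ι : Type*} [Fintype ι] (f : ι → X → X) (φ : X → ℝ)
    (n : ℕ) (ε r : ℝ) : ℝ :=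
  (1 / (Fintype.card ι : ℝ) ^ n) * ∑ σ : Fin n → ι, Qw f φ (List.ofFn σ) ε r

/-- `Q_n^s(f_0,…,f_{m-1},φ,ε,r) = (1/m^n) ∑_{|w|=n} Q_w^s`. -/
noncomputable def Qns {ι : Type*} [Fintype ι] (f : ι → X → X) (φ : X → ℝ)
    (n : ℕ) (ε r : ℝ) : ℝ :=
  (1 / (Fintype.card ι : ℝ) ^ n) * ∑ σ : Fin n → ι, Qws f φ (List.ofFn σ) ε r

/-- The topological `r`-pressure of the free semigroup action (spanning sets);
the limit as `ε → 0` is realised as a supremum over `ε > 0`, the quantity being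
monotone in `ε`. -/
noncomputable def Pr {ι : Type*} [Fintype ι] (f : ι → X → X) (φ : X → ℝ) (r : ℝ) : EReal :=
  ⨆ ε ∈ Set.Ioi (0 : ℝ), atTop.limsup fun n : ℕ =>
    (((n : ℝ)⁻¹ * Real.log (Qn f φ n ε r) : ℝ) : EReal)

/-- `P^s_r(f_0,…,f_{m-1},φ,ε)`, the fixed-`ε` separated-set `r`-pressure. -/
noncomputable def Pse {ι : Type*} [Fintype ι] (f : ι → X → X) (φ : X → ℝ) (ε r : ℝ) : EReal :=
  atTop.limsup fun n : ℕ => (((n : ℝ)⁻¹ * Real.log (Qns f φ n ε r) : ℝ) : EReal)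

/-- The topological `r`-pressure of the free semigroup action (separated sets). -/
noncomputable def Ps {ι : Type*} [Fintype ι] (f : ι → X → X) (φ : X → ℝ) (r : ℝ) : EReal :=
  ⨆ ε ∈ Set.Ioi (0 : ℝ), Pse f φ ε r

/-- Liminf variant of the separated-set topological `r`-pressure. -/
noncomputable def PsInf {ι : Type*} [Fintype ι] (f : ι → X → X) (φ : X → ℝ) (r : ℝ) : EReal :=
  ⨆ ε ∈ Set.Ioi (0 : ℝ), atTop.liminf fun n : ℕ =>
    (((n : ℝ)⁻¹ * Real.log (Qns f φ n ε r) : ℝ) : EReal)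

/-- `F` is a `(w, ε)`-spanning set for the Bowen metric `d_w` of the free semigroup action. -/
def span0 {ι : Type*} (f : ι → X → X) (w : List ι) (ε : ℝ) (F : Finset X) : Prop :=
  ∀ x : X, ∃ y ∈ F, ∀ i < w.length,
    dist (fw f (w.take i) x) (fw f (w.take i) y) ≤ ε

/-- `E` is a `(w, ε)`-separated set for the Bowen metric `d_w`. -/
def sep0 {ι : Type*} (f : ι → X → X) (w : List ι) (ε : ℝ) (E : Finset X) : Prop :=
  ∀ x ∈ E, ∀ y ∈ E, x ≠ y → ∃ i < w.length,
    ε < dist (fw f (w.take i) x) (fw f (w.take i) y)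

noncomputable def Qw0 {ι : Type*} (f : ι → X → X) (φ : X → ℝ) (w : List ι) (ε : ℝ) : ℝ :=
  sInf {s : ℝ | ∃ F : Finset X, span0 f w ε F ∧ s = ∑ x ∈ F, Real.exp (Sw f φ w x)}

noncomputable def Qws0 {ι : Type*} (f : ι → X → X) (φ : X → ℝ) (w : List ι) (ε : ℝ) : ℝ :=
  sSup {s : ℝ | ∃ E : Finset X, sep0 f w ε E ∧ s = ∑ x ∈ E, Real.exp (Sw f φ w x)}

noncomputable def Qn0 {ι : Type*} [Fintype ι] (f : ι → X → X) (φ : X → ℝ) (n : ℕ) (ε : ℝ) : ℝ :=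
  (1 / (Fintype.card ι : ℝ) ^ n) * ∑ σ : Fin n → ι, Qw0 f φ (List.ofFn σ) ε

noncomputable def Qns0 {ι : Type*} [Fintype ι] (f : ι → X → X) (φ : X → ℝ) (n : ℕ) (ε : ℝ) : ℝ :=
  (1 / (Fintype.card ι : ℝ) ^ n) * ∑ σ : Fin n → ι, Qws0 f φ (List.ofFn σ) ε

/-- The topological pressure of the free semigroup action. -/
noncomputable def P0 {ι : Type*} [Fintype ι] (f : ι → X → X) (φ : X → ℝ) : EReal :=
  ⨆ ε ∈ Set.Ioi (0 : ℝ), atTop.limsup fun n : ℕ =>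
    (((n : ℝ)⁻¹ * Real.log (Qn0 f φ n ε) : ℝ) : EReal)

/-- `r_w(ε,r)`: the smallest cardinality of a `(w,ε,r)`-spanning set. -/
noncomputable def rSpanCard {ι : Type*} (f : ι → X → X) (w : List ι) (ε r : ℝ) : ℕ :=
  sInf {k : ℕ | ∃ F : Finset X, rSpan f w ε r F ∧ F.card = k}

/-- The topological `r`-entropy of the free semigroup action. -/
noncomputable def hrEnt {ι : Type*} [Fintype ι] (f : ι → X → X) (r : ℝ) : EReal :=
  ⨆ ε ∈ Set.Ioi (0 : ℝ), atTop.limsup fun n : ℕ =>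
    (((n : ℝ)⁻¹ * Real.log ((1 / (Fintype.card ι : ℝ) ^ n) *
      ∑ σ : Fin n → ι, (rSpanCard f (List.ofFn σ) ε r : ℝ)) : ℝ) : EReal)

end FSG


set_option linter.unusedSectionVars false
set_option maxHeartbeats 1000000

section Aux
variable {X : Type*} [MetricSpace X] {ι : Type*} {f : ι → X → X} {φ : X → ℝ}

lemma fw_continuous (hf : ∀ i, Continuous (f i)) (w : List ι) : Continuous (fw f w) := by
  induction w with
  | nil => exact continuous_id
  | cons a w ih => exact ih.comp (hf a)

lemma abs_Sw_le {B : ℝ} (hB : ∀ x, |φ x| ≤ B) (w : List ι) (x : X) :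
    |Sw f φ w x| ≤ w.length * B := by
  calc |Sw f φ w x| ≤ ∑ i ∈ Finset.range w.length, |φ (fw f (w.take i) x)| :=
        Finset.abs_sum_le_sum_abs _ _
    _ ≤ ∑ _i ∈ Finset.range w.length, B := Finset.sum_le_sum fun i _ => hB _
    _ = w.length * B := by simp [Finset.sum_const, mul_comm]

lemma exists_span0 [CompactSpace X] (hf : ∀ i, Continuous (f i)) (w : List ι) {ε : ℝ}
    (hε : 0 < ε) : ∃ F : Finset X, span0 f w ε F := by
  obtain ⟨t, ht⟩ := isCompact_univ.elim_finite_subcover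
    (fun y : X => ⋂ i : Fin w.length, (fw f (w.take i.1)) ⁻¹'
      (Metric.ball (fw f (w.take i.1) y) ε))
    (fun y => isOpen_iInter_of_finite fun i =>
      (fw_continuous hf _).isOpen_preimage _ Metric.isOpen_ball)
    (fun x _ => Set.mem_iUnion.2 ⟨x, Set.mem_iInter.2 fun i => by
      simp [Metric.mem_ball, hε]⟩)
  refine ⟨t, fun x => ?_⟩
  obtain ⟨y, hy, hxy⟩ := Set.mem_iUnion₂.1 (ht (Set.mem_univ x))
  exact ⟨y, hy, fun i hi => le_of_lt (by
    have := Set.mem_iInter.1 hxy ⟨i, hi⟩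
    simpa [Metric.mem_ball] using this)⟩
variable {X : Type*} [MetricSpace X] {ι : Type*} {f : ι → X → X} {φ : X → ℝ}

/-- key injection lemma: separated sums are bounded by spanning sums. -/
lemma sum_exp_le_of_span {w : List ι} {E F : Finset X} {ε₀ δ η : ℝ}
    (hδε : 2 * δ ≤ ε₀)
    (hmod : ∀ a b : X, dist a b ≤ δ → |φ a - φ b| ≤ η)
    (hsep : ∀ x ∈ E, ∀ y ∈ E, x ≠ y →
      ∃ i < w.length, ε₀ < dist (fw f (w.take i) x) (fw f (w.take i) y))
    (hF : span0 f w δ F) :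
    ∑ x ∈ E, Real.exp (Sw f φ w x) ≤
      Real.exp (w.length * η) * ∑ y ∈ F, Real.exp (Sw f φ w y) := by
  classical
  have hch : ∀ x : X, ∃ y, y ∈ F ∧ ∀ i < w.length,
      dist (fw f (w.take i) x) (fw f (w.take i) y) ≤ δ := by
    intro x; obtain ⟨y, hy, h⟩ := hF x; exact ⟨y, hy, h⟩
  set G : X → X := fun x => Classical.choose (hch x) with hG
  have hGF : ∀ x, G x ∈ F := fun x => (Classical.choose_spec (hch x)).1
  have hGd : ∀ x, ∀ i < w.length,
      dist (fw f (w.take i) x) (fw f (w.take i) (G x)) ≤ δ :=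
    fun x => (Classical.choose_spec (hch x)).2
  have hinj : Set.InjOn G E := by
    intro x hx y hy hxy
    by_contra hne
    obtain ⟨i, hi, hgt⟩ := hsep x hx y hy hne
    have h1 := hGd x i hi
    have h2 := hGd y i hi
    rw [hxy] at h1
    have : dist (fw f (w.take i) x) (fw f (w.take i) y) ≤ 2 * δ := by
      have := dist_triangle (fw f (w.take i) x) (fw f (w.take i) (G y)) (fw f (w.take i) y)
      rw [dist_comm (fw f (w.take i) (G y))] at this
      linarith
    linarith
  have hSw : ∀ x : X, Sw f φ w x ≤ w.length * η + Sw f φ w (G x) := by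
    intro x
    have : Sw f φ w x - Sw f φ w (G x) ≤ w.length * η := by
      rw [Sw, Sw, ← Finset.sum_sub_distrib]
      calc ∑ i ∈ Finset.range w.length,
            (φ (fw f (w.take i) x) - φ (fw f (w.take i) (G x)))
          ≤ ∑ _i ∈ Finset.range w.length, η := Finset.sum_le_sum fun i hi => by
            have := hmod _ _ (hGd x i (Finset.mem_range.1 hi))
            exact (abs_le.1 this).2
        _ = w.length * η := by simp [mul_comm]
    linarith
  calc ∑ x ∈ E, Real.exp (Sw f φ w x)
      ≤ ∑ x ∈ E, Real.exp (w.length * η) * Real.exp (Sw f φ w (G x)) := by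
        refine Finset.sum_le_sum fun x _ => ?_
        rw [← Real.exp_add]
        exact Real.exp_le_exp.2 (hSw x)
    _ = Real.exp (w.length * η) * ∑ x ∈ E, Real.exp (Sw f φ w (G x)) := by
        rw [Finset.mul_sum]
    _ ≤ Real.exp (w.length * η) * ∑ y ∈ F, Real.exp (Sw f φ w y) := by
        refine mul_le_mul_of_nonneg_left ?_ (Real.exp_nonneg _)
        calc ∑ x ∈ E, Real.exp (Sw f φ w (G x))
            = ∑ y ∈ E.image G, Real.exp (Sw f φ w y) :=
              (Finset.sum_image (g := G) (f := fun y => Real.exp (Sw f φ w y)) (fun x hx y hy h => hinj hx hy h)).symm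
          _ ≤ ∑ y ∈ F, Real.exp (Sw f φ w y) :=
              Finset.sum_le_sum_of_subset_of_nonneg
                (Finset.image_subset_iff.2 fun x _ => hGF x)
                (fun _ _ _ => Real.exp_nonneg _)

/-- card version of the injection. -/
lemma card_le_of_sep {w : List ι} {E F : Finset X} {ε₀ δ : ℝ}
    (hδε : 2 * δ ≤ ε₀)
    (hsep : ∀ x ∈ E, ∀ y ∈ E, x ≠ y →
      ∃ i < w.length, ε₀ < dist (fw f (w.take i) x) (fw f (w.take i) y))
    (hF : span0 f w δ F) : E.card ≤ F.card := by
  classical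
  have hch : ∀ x : X, ∃ y, y ∈ F ∧ ∀ i < w.length,
      dist (fw f (w.take i) x) (fw f (w.take i) y) ≤ δ := by
    intro x; obtain ⟨y, hy, h⟩ := hF x; exact ⟨y, hy, h⟩
  refine Finset.card_le_card_of_injOn (fun x => Classical.choose (hch x))
    (fun x _ => (Classical.choose_spec (hch x)).1) ?_
  intro x hx y hy hxy
  by_contra hne
  obtain ⟨i, hi, hgt⟩ := hsep x hx y hy hne
  dsimp only at hxy
  have h1 := (Classical.choose_spec (hch x)).2 i hi
  have h2 := (Classical.choose_spec (hch y)).2 i hi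
  rw [hxy] at h1
  have := dist_triangle (fw f (w.take i) x)
    (fw f (w.take i) (Classical.choose (hch y))) (fw f (w.take i) y)
  rw [dist_comm (fw f (w.take i) (Classical.choose (hch y)))] at this
  linarith

lemma bddAbove_sumSet [CompactSpace X] (hf : ∀ i, Continuous (f i))
    {B : ℝ} (hB : ∀ x, |φ x| ≤ B)
    {w : List ι} {ε₀ : ℝ} (hε₀ : 0 < ε₀) {P : Finset X → Prop}
    (hP : ∀ E, P E → ∀ x ∈ E, ∀ y ∈ E, x ≠ y →
      ∃ i < w.length, ε₀ < dist (fw f (w.take i) x) (fw f (w.take i) y)) :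
    BddAbove {s : ℝ | ∃ E : Finset X, P E ∧ s = ∑ x ∈ E, Real.exp (Sw f φ w x)} := by
  obtain ⟨F, hF⟩ := exists_span0 hf w (show (0:ℝ) < ε₀/2 by linarith)
  refine ⟨Real.exp (w.length * (2*B)) * ∑ y ∈ F, Real.exp (Sw f φ w y), ?_⟩
  rintro s ⟨E, hE, rfl⟩
  refine sum_exp_le_of_span (by linarith) (fun a b _ => ?_) (hP E hE) hF
  have h1 := hB a; have h2 := hB b
  calc |φ a - φ b| ≤ |φ a| + |φ b| := abs_sub _ _
    _ ≤ 2 * B := by linarith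

lemma rSep_empty (w : List ι) (ε r : ℝ) : rSep f w ε r (∅ : Finset X) :=
  fun x hx => absurd hx (Finset.notMem_empty x)

lemma rSep_singleton (w : List ι) (ε r : ℝ) (x : X) : rSep f w ε r {x} := by
  intro a ha b hb hne
  rw [Finset.mem_singleton] at ha hb
  exact absurd (ha.trans hb.symm) hne

lemma sep0_empty (w : List ι) (ε : ℝ) : sep0 f w ε (∅ : Finset X) :=
  fun x hx => absurd hx (Finset.notMem_empty x)

lemma sep0_singleton (w : List ι) (ε : ℝ) (x : X) : sep0 f w ε {x} := by
  intro a ha b hb hne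
  rw [Finset.mem_singleton] at ha hb
  exact absurd (ha.trans hb.symm) hne

lemma rSep_pairs {w : List ι} {ε r : ℝ} (hε : 0 < ε) (hr : 0 < r) {E : Finset X}
    (hE : rSep f w ε r E) : ∀ x ∈ E, ∀ y ∈ E, x ≠ y →
      ∃ i < w.length, ε/2 < dist (fw f (w.take i) x) (fw f (w.take i) y) := by
  intro x hx y hy hne
  have h := hE x hx y hy hne
  have hpos : (0:ℝ) < (((Finset.range w.length).filter
      (fun i => ε ≤ dist (fw f (w.take i) x) (fw f (w.take i) y))).card : ℝ) := by
    refine lt_of_le_of_lt ?_ h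
    positivity
  have hne' : ((Finset.range w.length).filter
      (fun i => ε ≤ dist (fw f (w.take i) x) (fw f (w.take i) y))).Nonempty := by
    rw [← Finset.card_pos]
    exact_mod_cast hpos
  obtain ⟨i, hi⟩ := hne'
  rw [Finset.mem_filter, Finset.mem_range] at hi
  exact ⟨i, hi.1, by linarith [hi.2]⟩

lemma Qws_nonneg (w : List ι) (ε r : ℝ) : 0 ≤ Qws f φ w ε r := by
  refine Real.sSup_nonneg ?_
  rintro s ⟨E, _, rfl⟩
  positivity

lemma Qws0_nonneg (w : List ι) (ε : ℝ) : 0 ≤ Qws0 f φ w ε := by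
  refine Real.sSup_nonneg ?_
  rintro s ⟨E, _, rfl⟩
  positivity

lemma Qw0_nonneg (w : List ι) (ε : ℝ) : 0 ≤ Qw0 f φ w ε := by
  refine Real.sInf_nonneg ?_
  rintro s ⟨F, _, rfl⟩
  positivity

lemma bddAbove_Qws_set [CompactSpace X] (hf : ∀ i, Continuous (f i))
    {B : ℝ} (hB : ∀ x, |φ x| ≤ B) {w : List ι} {ε r : ℝ} (hε : 0 < ε) (hr : 0 < r) :
    BddAbove {s : ℝ | ∃ E : Finset X, rSep f w ε r E ∧
      s = ∑ x ∈ E, Real.exp (Sw f φ w x)} :=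
  bddAbove_sumSet hf hB (half_pos hε) (fun _ hE => rSep_pairs hε hr hE)

lemma bddAbove_Qws0_set [CompactSpace X] (hf : ∀ i, Continuous (f i))
    {B : ℝ} (hB : ∀ x, |φ x| ≤ B) {w : List ι} {ε : ℝ} (hε : 0 < ε) :
    BddAbove {s : ℝ | ∃ E : Finset X, sep0 f w ε E ∧
      s = ∑ x ∈ E, Real.exp (Sw f φ w x)} :=
  bddAbove_sumSet hf hB hε (fun _ hE => hE)

lemma Qws_pos [CompactSpace X] [Nonempty X] (hf : ∀ i, Continuous (f i))
    {B : ℝ} (hB : ∀ x, |φ x| ≤ B) {w : List ι} {ε r : ℝ} (hε : 0 < ε) (hr : 0 < r) :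
    0 < Qws f φ w ε r := by
  have hx : Real.exp (Sw f φ w (Classical.arbitrary X)) ≤ Qws f φ w ε r :=
    le_csSup (bddAbove_Qws_set hf hB hε hr)
      ⟨{Classical.arbitrary X}, rSep_singleton w ε r _, by simp⟩
  exact lt_of_lt_of_le (Real.exp_pos _) hx

lemma Qws0_pos [CompactSpace X] [Nonempty X] (hf : ∀ i, Continuous (f i))
    {B : ℝ} (hB : ∀ x, |φ x| ≤ B) {w : List ι} {ε : ℝ} (hε : 0 < ε) :
    0 < Qws0 f φ w ε := by
  have hx : Real.exp (Sw f φ w (Classical.arbitrary X)) ≤ Qws0 f φ w ε :=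
    le_csSup (bddAbove_Qws0_set hf hB hε)
      ⟨{Classical.arbitrary X}, sep0_singleton w ε _, by simp⟩
  exact lt_of_lt_of_le (Real.exp_pos _) hx

lemma Qw0_set_nonempty [CompactSpace X] (hf : ∀ i, Continuous (f i)) (w : List ι)
    {ε : ℝ} (hε : 0 < ε) :
    {s : ℝ | ∃ F : Finset X, span0 f w ε F ∧
      s = ∑ y ∈ F, Real.exp (Sw f φ w y)}.Nonempty := by
  obtain ⟨F, hF⟩ := exists_span0 hf w hε
  exact ⟨_, F, hF, rfl⟩

lemma exp_le_Qw0 [CompactSpace X] [Nonempty X] (hf : ∀ i, Continuous (f i))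
    {B : ℝ} (hB : ∀ x, |φ x| ≤ B) {w : List ι} {ε : ℝ} (hε : 0 < ε) :
    Real.exp (-(w.length * B)) ≤ Qw0 f φ w ε := by
  refine le_csInf (Qw0_set_nonempty hf w hε) ?_
  rintro s ⟨F, hF, rfl⟩
  obtain ⟨y, hyF, -⟩ := hF (Classical.arbitrary X)
  calc Real.exp (-(w.length * B)) ≤ Real.exp (Sw f φ w y) := by
        refine Real.exp_le_exp.2 ?_
        have := (abs_le.1 (abs_Sw_le (f := f) hB w y)).1
        linarith
    _ ≤ ∑ z ∈ F, Real.exp (Sw f φ w z) :=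
        Finset.single_le_sum (fun z _ => Real.exp_nonneg _) hyF

lemma Qw0_pos [CompactSpace X] [Nonempty X] (hf : ∀ i, Continuous (f i))
    {B : ℝ} (hB : ∀ x, |φ x| ≤ B) {w : List ι} {ε : ℝ} (hε : 0 < ε) :
    0 < Qw0 f φ w ε :=
  lt_of_lt_of_le (Real.exp_pos _) (exp_le_Qw0 hf hB hε)

lemma Qws_le_exp_mul_Qw0 [CompactSpace X] (hf : ∀ i, Continuous (f i))
    {w : List ι} {ε r δ η : ℝ} (hε : 0 < ε) (hr : 0 < r) (hδ : 0 < δ) (hδε : δ ≤ ε/4)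
    (hmod : ∀ a b : X, dist a b ≤ δ → |φ a - φ b| ≤ η) :
    Qws f φ w ε r ≤ Real.exp (w.length * η) * Qw0 f φ w δ := by
  refine Real.sSup_le ?_ (mul_nonneg (Real.exp_nonneg _) (Qw0_nonneg w δ))
  rintro s ⟨E, hE, rfl⟩
  have key : Real.exp (-(w.length * η)) * ∑ x ∈ E, Real.exp (Sw f φ w x) ≤
      Qw0 f φ w δ := by
    refine le_csInf (Qw0_set_nonempty hf w hδ) ?_
    rintro s' ⟨F, hF, rfl⟩
    have h := sum_exp_le_of_span (show 2*δ ≤ ε/2 by linarith) hmod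
      (rSep_pairs hε hr hE) hF
    rw [Real.exp_neg, inv_mul_le_iff₀ (Real.exp_pos _)]
    exact h
  rw [Real.exp_neg, inv_mul_le_iff₀ (Real.exp_pos _)] at key
  exact key

lemma Qw0_le_Qws0 [CompactSpace X] (hf : ∀ i, Continuous (f i))
    {B : ℝ} (hB : ∀ x, |φ x| ≤ B) {w : List ι} {ε : ℝ} (hε : 0 < ε) :
    Qw0 f φ w ε ≤ Qws0 f φ w ε := by
  classical
  obtain ⟨F, hF⟩ := exists_span0 hf w (half_pos hε)
  set C : Set ℕ := {k | ∃ E : Finset X, sep0 f w ε E ∧ E.card = k} with hC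
  have hCne : C.Nonempty := ⟨0, ∅, sep0_empty w ε, Finset.card_empty⟩
  have hCb : BddAbove C := by
    refine ⟨F.card, ?_⟩
    rintro k ⟨E, hE, rfl⟩
    exact card_le_of_sep (by linarith) hE hF
  obtain ⟨E, hE, hEcard⟩ := Nat.sSup_mem hCne hCb
  have hspan : span0 f w ε E := by
    intro x
    by_contra hx
    push_neg at hx
    have hxE : x ∉ E := by
      intro hmem
      obtain ⟨i, hi, hgt⟩ := hx x hmem
      exact absurd hgt (by simp [hε.le])
    have hsep' : sep0 f w ε (insert x E) := by
      intro a ha b hb hne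
      rcases Finset.mem_insert.1 ha with rfl | ha'
      · rcases Finset.mem_insert.1 hb with rfl | hb'
        · exact absurd rfl hne
        · exact hx b hb'
      · rcases Finset.mem_insert.1 hb with rfl | hb'
        · obtain ⟨i, hi, h⟩ := hx a ha'
          exact ⟨i, hi, by rwa [dist_comm]⟩
        · exact hE a ha' b hb' hne
    have hmem : E.card + 1 ∈ C :=
      ⟨insert x E, hsep', by rw [Finset.card_insert_of_notMem hxE]⟩
    have := le_csSup hCb hmem
    omega
  calc Qw0 f φ w ε ≤ ∑ x ∈ E, Real.exp (Sw f φ w x) :=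
        csInf_le ⟨0, by rintro s ⟨F', _, rfl⟩; positivity⟩ ⟨E, hspan, rfl⟩
    _ ≤ Qws0 f φ w ε := le_csSup (bddAbove_Qws0_set hf hB hε) ⟨E, hE, rfl⟩

lemma exists_weighted_indep {α : Type*} [DecidableEq α] (R : α → α → Prop) [DecidableRel R]
    (hsym : ∀ a b, R a b → R b a) (wt : α → ℝ) (hwt : ∀ a, 0 < wt a) (D : ℝ) :
    ∀ E : Finset α, (∀ x ∈ E, R x x) →
      (∀ x ∈ E, ((E.filter (fun y => R x y)).card : ℝ) ≤ D) →
      ∃ E' : Finset α, E' ⊆ E ∧ (∀ x ∈ E', ∀ y ∈ E', x ≠ y → ¬ R x y) ∧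
        ∑ a ∈ E, wt a ≤ D * ∑ a ∈ E', wt a := by
  intro E
  induction E using Finset.strongInduction with
  | _ E ih =>
    intro hrefl hD
    rcases E.eq_empty_or_nonempty with rfl | hne
    · exact ⟨∅, Finset.Subset.refl _, by simp, by simp⟩
    obtain ⟨x, hxE, hmax⟩ := Finset.exists_max_image E wt hne
    set N := E.filter (fun y => R x y) with hN
    have hxN : x ∈ N := Finset.mem_filter.2 ⟨hxE, hrefl x hxE⟩
    have hNsub : N ⊆ E := Finset.filter_subset _ _
    have hss : E \ N ⊂ E := Finset.sdiff_ssubset hNsub ⟨x, hxN⟩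
    obtain ⟨E₂, hE₂sub, hind, hsum⟩ := ih (E \ N) hss
      (fun a ha => hrefl a (Finset.mem_sdiff.1 ha).1)
      (fun a ha => le_trans (Nat.cast_le.2 (Finset.card_le_card
        (Finset.filter_subset_filter _ Finset.sdiff_subset)))
        (hD a (Finset.mem_sdiff.1 ha).1))
    have hxE₂ : x ∉ E₂ := fun h => (Finset.mem_sdiff.1 (hE₂sub h)).2 hxN
    refine ⟨insert x E₂, ?_, ?_, ?_⟩
    · intro a ha
      rcases Finset.mem_insert.1 ha with rfl | h
      · exact hxE
      · exact (Finset.mem_sdiff.1 (hE₂sub h)).1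
    · intro a ha b hb hab
      rcases Finset.mem_insert.1 ha with rfl | ha' <;>
        rcases Finset.mem_insert.1 hb with rfl | hb'
      · exact absurd rfl hab
      · intro hR
        exact (Finset.mem_sdiff.1 (hE₂sub hb')).2
          (Finset.mem_filter.2 ⟨(Finset.mem_sdiff.1 (hE₂sub hb')).1, hR⟩)
      · intro hR
        exact (Finset.mem_sdiff.1 (hE₂sub ha')).2
          (Finset.mem_filter.2 ⟨(Finset.mem_sdiff.1 (hE₂sub ha')).1, hsym _ _ hR⟩)
      · exact hind a ha' b hb' hab
    · have h1 : ∑ a ∈ N, wt a ≤ D * wt x := by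
        calc ∑ a ∈ N, wt a ≤ ∑ _a ∈ N, wt x :=
              Finset.sum_le_sum fun a ha => hmax a (hNsub ha)
          _ = (N.card : ℝ) * wt x := by rw [Finset.sum_const, nsmul_eq_mul]
          _ ≤ D * wt x := mul_le_mul_of_nonneg_right (hD x hxE) (hwt x).le
      calc ∑ a ∈ E, wt a = ∑ a ∈ E \ N, wt a + ∑ a ∈ N, wt a :=
            (Finset.sum_sdiff hNsub).symm
        _ ≤ D * ∑ a ∈ E₂, wt a + D * wt x := add_le_add hsum h1
        _ = D * ∑ a ∈ insert x E₂, wt a := by rw [Finset.sum_insert hxE₂]; ring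

lemma card_nbhd_le {w : List ι} {ε r t : ℝ} (hε : 0 < ε) (ht : 1 ≤ t)
    {F₀ : Finset X} (hF₀ : ∀ a : X, ∃ p ∈ F₀, dist a p ≤ ε/3)
    {E : Finset X} (hE : sep0 f w ε E) (x : X) :
    ((E.filter (fun y => (((Finset.range w.length).filter
        (fun i => ε/2 ≤ dist (fw f (w.take i) x) (fw f (w.take i) y))).card : ℝ)
        ≤ r * w.length)).card : ℝ)
      ≤ t ^ (⌊r * (w.length : ℝ)⌋₊) * (1 + (F₀.card : ℝ) / t) ^ w.length := by
  classical
  have ht0 : (0:ℝ) < t := lt_of_lt_of_le one_pos ht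
  set n := w.length with hn
  set K0 := ⌊r * (n:ℝ)⌋₊ with hK0
  have hch : ∀ a : X, ∃ p, p ∈ F₀ ∧ dist a p ≤ ε/3 := fun a => by
    obtain ⟨p, hp, h⟩ := hF₀ a; exact ⟨p, hp, h⟩
  set cd : X → X := fun a => Classical.choose (hch a) with hcd
  have hcdF : ∀ a, cd a ∈ F₀ := fun a => (Classical.choose_spec (hch a)).1
  have hcdd : ∀ a, dist a (cd a) ≤ ε/3 := fun a => (Classical.choose_spec (hch a)).2
  set Φ : X → (Fin n → Option X) := fun y i =>
    if ε/2 ≤ dist (fw f (w.take i.1) x) (fw f (w.take i.1) y)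
    then some (cd (fw f (w.take i.1) y)) else none with hΦ
  set Enb := E.filter (fun y => (((Finset.range n).filter
      (fun i => ε/2 ≤ dist (fw f (w.take i) x) (fw f (w.take i) y))).card : ℝ)
      ≤ r * n) with hEnb
  set G : Finset (Fin n → Option X) :=
    (Fintype.piFinset (fun _ : Fin n => insert none (F₀.image some))).filter
      (fun g => (Finset.univ.filter (fun i => g i ≠ none)).card ≤ K0) with hG
  have hmaps : ∀ y ∈ Enb, Φ y ∈ G := by
    intro y hy
    rw [hEnb, Finset.mem_filter] at hy
    rw [hG, Finset.mem_filter]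
    constructor
    · refine Fintype.mem_piFinset.2 fun i => ?_
      by_cases h : ε/2 ≤ dist (fw f (w.take i.1) x) (fw f (w.take i.1) y)
      · rw [hΦ]; dsimp only
        rw [if_pos h]
        exact Finset.mem_insert.2 (Or.inr (Finset.mem_image_of_mem some (hcdF _)))
      · rw [hΦ]; dsimp only
        rw [if_neg h]
        exact Finset.mem_insert_self _ _
    · have hsupp : (Finset.univ.filter (fun i : Fin n => Φ y i ≠ none)).card =
          ((Finset.range n).filter (fun i =>
            ε/2 ≤ dist (fw f (w.take i) x) (fw f (w.take i) y))).card := by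
        rw [Finset.card_filter, Finset.card_filter,
          ← Fin.sum_univ_eq_sum_range (fun i =>
            if ε/2 ≤ dist (fw f (w.take i) x) (fw f (w.take i) y) then (1:ℕ) else 0) n]
        refine Finset.sum_congr rfl fun i _ => ?_
        by_cases h : ε/2 ≤ dist (fw f (w.take i.1) x) (fw f (w.take i.1) y) <;>
          simp [hΦ, h]
      rw [hsupp]
      exact Nat.le_floor hy.2
  have hinj : Set.InjOn Φ (Enb : Set X) := by
    intro y hy y' hy' hΦeq
    by_contra hne
    rw [Finset.mem_coe, hEnb, Finset.mem_filter] at hy hy'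
    obtain ⟨i, hi, hgt⟩ := hE y hy.1 y' hy'.1 hne
    have h := congrFun hΦeq ⟨i, hi⟩
    simp only [hΦ] at h
    by_cases h1 : ε/2 ≤ dist (fw f (w.take i) x) (fw f (w.take i) y) <;>
      by_cases h2 : ε/2 ≤ dist (fw f (w.take i) x) (fw f (w.take i) y')
    · rw [if_pos h1, if_pos h2] at h
      have hp := Option.some_injective _ h
      have d1 := hcdd (fw f (w.take i) y)
      have d2 := hcdd (fw f (w.take i) y')
      rw [hp] at d1
      have htr := dist_triangle (fw f (w.take i) y) (cd (fw f (w.take i) y'))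
        (fw f (w.take i) y')
      rw [dist_comm (cd (fw f (w.take i) y')) (fw f (w.take i) y')] at htr
      linarith
    · rw [if_pos h1, if_neg h2] at h
      exact Option.some_ne_none _ h
    · rw [if_neg h1, if_pos h2] at h
      exact Option.some_ne_none _ h.symm
    · push_neg at h1 h2
      have htr := dist_triangle (fw f (w.take i) y) (fw f (w.take i) x)
        (fw f (w.take i) y')
      rw [dist_comm (fw f (w.take i) y) (fw f (w.take i) x)] at htr
      linarith
  have hcard1 : Enb.card ≤ G.card := Finset.card_le_card_of_injOn Φ hmaps hinj
  have hcard2 : (G.card : ℝ) ≤ t ^ K0 * (1 + (F₀.card : ℝ) / t) ^ n := by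
    have hstep : ∀ g ∈ G, (1:ℝ) ≤ t ^ K0 *
        (1/t) ^ ((Finset.univ.filter (fun i => g i ≠ none)).card) := by
      intro g hg
      have hc := (Finset.mem_filter.1 hg).2
      have hpow : (t:ℝ) ^ ((Finset.univ.filter (fun i => g i ≠ none)).card) ≤ t ^ K0 :=
        pow_le_pow_right₀ ht hc
      rw [one_div, inv_pow, ← div_eq_mul_inv, le_div_iff₀ (pow_pos ht0 _), one_mul]
      exact hpow
    calc (G.card : ℝ) = ∑ _g ∈ G, (1:ℝ) := by simp
      _ ≤ ∑ g ∈ G, t ^ K0 * (1/t) ^ ((Finset.univ.filter (fun i => g i ≠ none)).card) :=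
          Finset.sum_le_sum hstep
      _ ≤ ∑ g ∈ Fintype.piFinset (fun _ : Fin n => insert none (F₀.image some)),
            t ^ K0 * (1/t) ^ ((Finset.univ.filter (fun i => g i ≠ none)).card) :=
          Finset.sum_le_sum_of_subset_of_nonneg (Finset.filter_subset _ _)
            (fun _ _ _ => by positivity)
      _ = t ^ K0 * ∑ g ∈ Fintype.piFinset (fun _ : Fin n => insert none (F₀.image some)),
            ∏ i : Fin n, (if g i = none then (1:ℝ) else 1/t) := by
          rw [Finset.mul_sum]
          refine Finset.sum_congr rfl fun g _ => ?_
          congr 1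
          rw [← Finset.prod_const (b := (1:ℝ)/t), Finset.prod_filter]
          refine Finset.prod_congr rfl fun i _ => ?_
          by_cases h : g i = none <;> simp [h]
      _ = t ^ K0 * ∏ i : Fin n, ∑ v ∈ insert none (F₀.image some),
            (if v = none then (1:ℝ) else 1/t) := by
          congr 1
          exact (Finset.prod_univ_sum (fun _ : Fin n => insert none (F₀.image some))
            (fun _ v => if v = none then (1:ℝ) else 1/t)).symm
      _ = t ^ K0 * (1 + (F₀.card : ℝ) / t) ^ n := by
          congr 1
          have hval : ∑ v ∈ insert none (F₀.image some),
              (if v = (none : Option X) then (1:ℝ) else 1/t) = 1 + (F₀.card : ℝ) / t := by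
            rw [Finset.sum_insert (by simp)]
            have h2 : ∀ v ∈ F₀.image some, (if v = (none : Option X) then (1:ℝ) else 1/t)
                = 1/t := by
              intro v hv
              obtain ⟨p, -, rfl⟩ := Finset.mem_image.1 hv
              simp
            rw [Finset.sum_congr rfl h2, Finset.sum_const,
              Finset.card_image_of_injective _ (Option.some_injective X), nsmul_eq_mul]
            simp [div_eq_mul_inv]
          rw [Finset.prod_congr rfl (fun i _ => hval), Finset.prod_const]
          simp
  calc ((Enb.card : ℝ)) ≤ (G.card : ℝ) := Nat.cast_le.2 hcard1
    _ ≤ t ^ K0 * (1 + (F₀.card : ℝ) / t) ^ n := hcard2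

lemma Qws0_le_mul_Qws [CompactSpace X] (hf : ∀ i, Continuous (f i))
    {B : ℝ} (hB : ∀ x, |φ x| ≤ B) {w : List ι} {ε r t : ℝ} (hε : 0 < ε) (hr : 0 < r)
    (ht : 1 ≤ t) {F₀ : Finset X} (hF₀ : ∀ a : X, ∃ p ∈ F₀, dist a p ≤ ε/3) :
    Qws0 f φ w ε ≤ (t ^ (⌊r * (w.length : ℝ)⌋₊) * (1 + (F₀.card : ℝ) / t) ^ w.length) *
      Qws f φ w (ε/2) r := by
  classical
  have ht0 : (0:ℝ) < t := lt_of_lt_of_le one_pos ht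
  set D := t ^ (⌊r * (w.length:ℝ)⌋₊) * (1 + (F₀.card:ℝ)/t) ^ w.length with hD
  have hD0 : (0:ℝ) ≤ D := by
    rw [hD]; positivity
  have hQ : 0 ≤ Qws f φ w (ε/2) r := Qws_nonneg _ _ _
  refine Real.sSup_le ?_ (mul_nonneg hD0 hQ)
  rintro s ⟨E, hE, rfl⟩
  set R : X → X → Prop := fun a b => (((Finset.range w.length).filter
      (fun i => ε/2 ≤ dist (fw f (w.take i) a) (fw f (w.take i) b))).card : ℝ)
      ≤ r * w.length with hR
  have hsym : ∀ a b, R a b → R b a := by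
    intro a b h
    rw [hR] at h ⊢
    dsimp only at h ⊢
    have heq : ((Finset.range w.length).filter
        (fun i => ε/2 ≤ dist (fw f (w.take i) b) (fw f (w.take i) a))) =
        ((Finset.range w.length).filter
        (fun i => ε/2 ≤ dist (fw f (w.take i) a) (fw f (w.take i) b))) :=
      Finset.filter_congr fun i _ => by rw [dist_comm]
    rw [heq]
    exact h
  have hrefl : ∀ x ∈ E, R x x := by
    intro x _
    rw [hR]
    dsimp only
    have heq : ((Finset.range w.length).filter
        (fun i => ε/2 ≤ dist (fw f (w.take i) x) (fw f (w.take i) x))) = ∅ :=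
      Finset.filter_false_of_mem fun i _ => by simp [dist_self]; linarith
    rw [heq]
    simp
    positivity
  have hcount : ∀ x ∈ E, ((E.filter (fun y => R x y)).card : ℝ) ≤ D := by
    intro x _
    have := card_nbhd_le (r := r) hε ht hF₀ hE x
    rw [hD]
    convert this using 4
  obtain ⟨E', hsub, hind, hsum⟩ := exists_weighted_indep R hsym
    (fun a => Real.exp (Sw f φ w a)) (fun a => Real.exp_pos _) D E hrefl hcount
  have hE' : rSep f w (ε/2) r E' := fun a ha b hb hne => not_le.1 (hind a ha b hb hne)
  calc ∑ a ∈ E, Real.exp (Sw f φ w a) ≤ D * ∑ a ∈ E', Real.exp (Sw f φ w a) := hsum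
    _ ≤ D * Qws f φ w (ε/2) r := mul_le_mul_of_nonneg_left
        (le_csSup (bddAbove_Qws_set hf hB (half_pos hε) hr) ⟨E', hE', rfl⟩) hD0

section QnLevel
variable [Fintype ι]

lemma Qns_pos [CompactSpace X] [Nonempty X] (hf : ∀ i, Continuous (f i))
    {B : ℝ} (hB : ∀ x, |φ x| ≤ B) {n : ℕ} {ε r : ℝ} (hε : 0 < ε) (hr : 0 < r)
    (hm : 0 < Fintype.card ι) : 0 < Qns f φ n ε r := by
  have : Nonempty ι := Fintype.card_pos_iff.1 hm
  rw [Qns]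
  refine mul_pos (div_pos one_pos (pow_pos (by exact_mod_cast hm) n)) ?_
  exact Finset.sum_pos (fun σ _ => Qws_pos hf hB hε hr) Finset.univ_nonempty

lemma Qns0_pos [CompactSpace X] [Nonempty X] (hf : ∀ i, Continuous (f i))
    {B : ℝ} (hB : ∀ x, |φ x| ≤ B) {n : ℕ} {ε : ℝ} (hε : 0 < ε)
    (hm : 0 < Fintype.card ι) : 0 < Qns0 f φ n ε := by
  have : Nonempty ι := Fintype.card_pos_iff.1 hm
  rw [Qns0]
  refine mul_pos (div_pos one_pos (pow_pos (by exact_mod_cast hm) n)) ?_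
  exact Finset.sum_pos (fun σ _ => Qws0_pos hf hB hε) Finset.univ_nonempty

lemma Qn0_pos [CompactSpace X] [Nonempty X] (hf : ∀ i, Continuous (f i))
    {B : ℝ} (hB : ∀ x, |φ x| ≤ B) {n : ℕ} {ε : ℝ} (hε : 0 < ε)
    (hm : 0 < Fintype.card ι) : 0 < Qn0 f φ n ε := by
  have : Nonempty ι := Fintype.card_pos_iff.1 hm
  rw [Qn0]
  refine mul_pos (div_pos one_pos (pow_pos (by exact_mod_cast hm) n)) ?_
  exact Finset.sum_pos (fun σ _ => Qw0_pos hf hB hε) Finset.univ_nonempty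

lemma inv_pow_nonneg (n : ℕ) : (0:ℝ) ≤ 1 / (Fintype.card ι : ℝ) ^ n :=
  div_nonneg zero_le_one (pow_nonneg (Nat.cast_nonneg _) n)

lemma Qn0_le_Qns0 [CompactSpace X] (hf : ∀ i, Continuous (f i))
    {B : ℝ} (hB : ∀ x, |φ x| ≤ B) {n : ℕ} {ε : ℝ} (hε : 0 < ε) :
    Qn0 f φ n ε ≤ Qns0 f φ n ε := by
  rw [Qn0, Qns0]
  exact mul_le_mul_of_nonneg_left
    (Finset.sum_le_sum fun σ _ => Qw0_le_Qws0 hf hB hε) (inv_pow_nonneg n)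

lemma Qns0_le_mul_Qns [CompactSpace X] (hf : ∀ i, Continuous (f i))
    {B : ℝ} (hB : ∀ x, |φ x| ≤ B) {n : ℕ} {ε r t : ℝ} (hε : 0 < ε) (hr : 0 < r)
    (ht : 1 ≤ t) {F₀ : Finset X} (hF₀ : ∀ a : X, ∃ p ∈ F₀, dist a p ≤ ε/3) :
    Qns0 f φ n ε ≤ (t ^ (⌊r * (n : ℝ)⌋₊) * (1 + (F₀.card : ℝ) / t) ^ n) *
      Qns f φ n (ε/2) r := by
  have key : ∀ σ : Fin n → ι, Qws0 f φ (List.ofFn σ) ε ≤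
      (t ^ (⌊r * (n:ℝ)⌋₊) * (1 + (F₀.card:ℝ)/t) ^ n) * Qws f φ (List.ofFn σ) (ε/2) r := by
    intro σ
    have h := Qws0_le_mul_Qws (w := List.ofFn σ) hf hB hε hr ht hF₀
    rwa [List.length_ofFn] at h
  rw [Qns0, Qns]
  calc (1 / (Fintype.card ι : ℝ) ^ n) * ∑ σ : Fin n → ι, Qws0 f φ (List.ofFn σ) ε
      ≤ (1 / (Fintype.card ι : ℝ) ^ n) * ∑ σ : Fin n → ι,
          ((t ^ (⌊r * (n:ℝ)⌋₊) * (1 + (F₀.card:ℝ)/t) ^ n) * Qws f φ (List.ofFn σ) (ε/2) r) :=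
        mul_le_mul_of_nonneg_left (Finset.sum_le_sum fun σ _ => key σ) (inv_pow_nonneg n)
    _ = (t ^ (⌊r * (n:ℝ)⌋₊) * (1 + (F₀.card:ℝ)/t) ^ n) *
        ((1 / (Fintype.card ι : ℝ) ^ n) * ∑ σ : Fin n → ι, Qws f φ (List.ofFn σ) (ε/2) r) := by
        rw [← Finset.mul_sum]
        ring

lemma Qns_le_exp_mul_Qn0 [CompactSpace X] (hf : ∀ i, Continuous (f i))
    {n : ℕ} {ε r δ η : ℝ} (hε : 0 < ε) (hr : 0 < r) (hδ : 0 < δ) (hδε : δ ≤ ε/4)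
    (hmod : ∀ a b : X, dist a b ≤ δ → |φ a - φ b| ≤ η) :
    Qns f φ n ε r ≤ Real.exp (n * η) * Qn0 f φ n δ := by
  have key : ∀ σ : Fin n → ι, Qws f φ (List.ofFn σ) ε r ≤
      Real.exp (n * η) * Qw0 f φ (List.ofFn σ) δ := by
    intro σ
    have h := Qws_le_exp_mul_Qw0 (w := List.ofFn σ) hf hε hr hδ hδε hmod
    rwa [List.length_ofFn] at h
  rw [Qns, Qn0]
  calc (1 / (Fintype.card ι : ℝ) ^ n) * ∑ σ : Fin n → ι, Qws f φ (List.ofFn σ) ε r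
      ≤ (1 / (Fintype.card ι : ℝ) ^ n) * ∑ σ : Fin n → ι,
          (Real.exp (n * η) * Qw0 f φ (List.ofFn σ) δ) :=
        mul_le_mul_of_nonneg_left (Finset.sum_le_sum fun σ _ => key σ) (inv_pow_nonneg n)
    _ = Real.exp (n * η) *
        ((1 / (Fintype.card ι : ℝ) ^ n) * ∑ σ : Fin n → ι, Qw0 f φ (List.ofFn σ) δ) := by
        rw [← Finset.mul_sum]
        ring

lemma Qws_anti [CompactSpace X] (hf : ∀ i, Continuous (f i))
    {B : ℝ} (hB : ∀ x, |φ x| ≤ B) {w : List ι} {ε r r' : ℝ} (hε : 0 < ε) (hr : 0 < r)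
    (hrr : r ≤ r') : Qws f φ w ε r' ≤ Qws f φ w ε r := by
  refine csSup_le_csSup (bddAbove_Qws_set hf hB hε hr) ⟨0, ∅, rSep_empty _ _ _, by simp⟩ ?_
  rintro s ⟨E, hE, rfl⟩
  refine ⟨E, fun a ha b hb hne => ?_, rfl⟩
  refine lt_of_le_of_lt ?_ (hE a ha b hb hne)
  exact mul_le_mul_of_nonneg_right hrr (Nat.cast_nonneg _)

lemma Qns_anti [CompactSpace X] (hf : ∀ i, Continuous (f i))
    {B : ℝ} (hB : ∀ x, |φ x| ≤ B) {n : ℕ} {ε r r' : ℝ} (hε : 0 < ε) (hr : 0 < r)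
    (hrr : r ≤ r') : Qns f φ n ε r' ≤ Qns f φ n ε r := by
  rw [Qns, Qns]
  exact mul_le_mul_of_nonneg_left
    (Finset.sum_le_sum fun σ _ => Qws_anti hf hB hε hr hrr) (inv_pow_nonneg n)

end QnLevel

lemma limsup_coe_le_const_add (u v : ℕ → ℝ) (c : ℝ)
    (h : ∀ᶠ n in atTop, u n ≤ c + v n) :
    atTop.limsup (fun n => ((u n : ℝ) : EReal)) ≤
      (c : EReal) + atTop.limsup (fun n => ((v n : ℝ) : EReal)) := by
  have h1 : atTop.limsup (fun n => ((u n : ℝ) : EReal)) ≤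
      atTop.limsup (fun n => (((c + v n : ℝ)) : EReal)) :=
    limsup_le_limsup (h.mono fun n hn => EReal.coe_le_coe_iff.2 hn)
  refine h1.trans ?_
  have h2 : (fun n => (((c + v n : ℝ)) : EReal)) =
      (fun _ : ℕ => (c : EReal)) + (fun n => ((v n : ℝ) : EReal)) := by
    funext n
    simp [EReal.coe_add]
  rw [h2]
  refine (EReal.limsup_add_le ?_ ?_).trans_eq ?_
  · left
    rw [limsup_const]
    exact EReal.coe_ne_bot c
  · left
    rw [limsup_const]
    exact EReal.coe_ne_top c
  · rw [limsup_const]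

lemma EReal.le_of_forall_le_add' {x y : EReal}
    (h : ∀ η : ℝ, 0 < η → x ≤ (η : EReal) + y) : x ≤ y := by
  induction y using EReal.rec with
  | bot =>
    have := h 1 one_pos
    simpa using this
  | coe b =>
    induction x using EReal.rec with
    | bot => exact bot_le
    | coe a =>
      refine EReal.coe_le_coe_iff.2 ?_
      by_contra hab
      push_neg at hab
      have := h ((a - b)/2) (by linarith)
      rw [← EReal.coe_add] at this
      have := EReal.coe_le_coe_iff.1 this
      linarith
    | top =>
      exfalso
      have := h 1 one_pos
      rw [← EReal.coe_add] at this
      exact absurd this (not_le.2 (EReal.coe_lt_top _))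
  | top => exact le_top

end Aux


theorem tendsto_Ps_pressure
    {X : Type*} [MetricSpace X] [CompactSpace X] {m : ℕ}
    (f : Fin m → X → X) (hf : ∀ i, Continuous (f i))
    (φ : X → ℝ) (hφ : Continuous φ) :
    Filter.Tendsto (fun r : ℝ => Ps f φ r)
      (nhdsWithin (0 : ℝ) (Set.Ioi 0)) (nhds (P0 f φ)) := by
  classical
  have hIoi : (Set.Ioi (0:ℝ)).Nonempty := ⟨1, Set.mem_Ioi.2 one_pos⟩
  rcases isEmpty_or_nonempty X with hX | hX
  · -- X is empty: everything is 0
    have hsum0 : ∀ (E : Finset X), ∑ x ∈ E, Real.exp (Sw f φ (([]:List (Fin m))) x) = 0 :=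
      fun E => Finset.sum_eq_zero fun x _ => (IsEmpty.elim hX x)
    have hQws : ∀ (w : List (Fin m)) (ε r : ℝ), Qws f φ w ε r = 0 := by
      intro w ε r
      rw [Qws]
      have : {s : ℝ | ∃ E : Finset X, rSep f w ε r E ∧
          s = ∑ x ∈ E, Real.exp (Sw f φ w x)} = {0} := by
        ext s
        simp only [Set.mem_setOf_eq, Set.mem_singleton_iff]
        constructor
        · rintro ⟨E, _, rfl⟩
          exact Finset.sum_eq_zero fun x _ => (IsEmpty.elim hX x)
        · rintro rfl
          exact ⟨∅, rSep_empty _ _ _, by simp⟩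
      rw [this, csSup_singleton]
    have hQw0 : ∀ (w : List (Fin m)) (ε : ℝ), Qw0 f φ w ε = 0 := by
      intro w ε
      rw [Qw0]
      have : {s : ℝ | ∃ F : Finset X, span0 f w ε F ∧
          s = ∑ x ∈ F, Real.exp (Sw f φ w x)} = {0} := by
        ext s
        simp only [Set.mem_setOf_eq, Set.mem_singleton_iff]
        constructor
        · rintro ⟨E, _, rfl⟩
          exact Finset.sum_eq_zero fun x _ => (IsEmpty.elim hX x)
        · rintro rfl
          exact ⟨∅, fun x => (IsEmpty.elim hX x), by simp⟩
      rw [this, csInf_singleton]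
    have hPs : ∀ r : ℝ, Ps f φ r = 0 := by
      intro r
      rw [Ps]
      have hPse : ∀ ε ∈ Set.Ioi (0:ℝ), Pse f φ ε r = (0 : EReal) := by
        intro ε _
        rw [Pse]
        have : ∀ n : ℕ, (((n : ℝ)⁻¹ * Real.log (Qns f φ n ε r) : ℝ) : EReal) = (0:EReal) := by
          intro n
          have : Qns f φ n ε r = 0 := by
            rw [Qns]
            rw [Finset.sum_congr rfl fun σ _ => hQws (List.ofFn σ) ε r]
            simp
          rw [this]
          simp
        rw [funext this]
        exact limsup_const _
      rw [iSup_congr fun ε => iSup_congr fun hε => hPse ε hε]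
      rw [biSup_const hIoi]
    have hP0 : P0 f φ = 0 := by
      rw [P0]
      have hinner : ∀ ε ∈ Set.Ioi (0:ℝ), (atTop.limsup fun n : ℕ =>
          (((n : ℝ)⁻¹ * Real.log (Qn0 f φ n ε) : ℝ) : EReal)) = (0 : EReal) := by
        intro ε _
        have : ∀ n : ℕ, (((n : ℝ)⁻¹ * Real.log (Qn0 f φ n ε) : ℝ) : EReal) = (0:EReal) := by
          intro n
          have : Qn0 f φ n ε = 0 := by
            rw [Qn0]
            rw [Finset.sum_congr rfl fun σ _ => hQw0 (List.ofFn σ) ε]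
            simp
          rw [this]
          simp
        rw [funext this]
        exact limsup_const _
      rw [iSup_congr fun ε => iSup_congr fun hε => hinner ε hε]
      rw [biSup_const hIoi]
    rw [hP0]
    have : (fun r : ℝ => Ps f φ r) = fun _ => (0 : EReal) := funext hPs
    rw [this]
    exact tendsto_const_nhds
  rcases Nat.eq_zero_or_pos m with hm | hm
  · -- m = 0
    subst hm
    have hcard : Fintype.card (Fin 0) = 0 := by simp
    have hQns : ∀ n : ℕ, 1 ≤ n → ∀ ε r : ℝ, Qns f φ n ε r = 0 := by
      intro n hn ε r
      rw [Qns]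
      have : ∑ σ : Fin n → Fin 0, Qws f φ (List.ofFn σ) ε r = 0 :=
        Finset.sum_eq_zero fun σ _ => ((σ ⟨0, hn⟩).elim0)
      rw [this, mul_zero]
    have hQn0 : ∀ n : ℕ, 1 ≤ n → ∀ ε : ℝ, Qn0 f φ n ε = 0 := by
      intro n hn ε
      rw [Qn0]
      have : ∑ σ : Fin n → Fin 0, Qw0 f φ (List.ofFn σ) ε = 0 :=
        Finset.sum_eq_zero fun σ _ => ((σ ⟨0, hn⟩).elim0)
      rw [this, mul_zero]
    have hPs : ∀ r : ℝ, Ps f φ r = 0 := by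
      intro r
      rw [Ps]
      have hPse : ∀ ε ∈ Set.Ioi (0:ℝ), Pse f φ ε r = (0 : EReal) := by
        intro ε _
        rw [Pse]
        have hev : ∀ᶠ (n : ℕ) in atTop, (((n : ℝ)⁻¹ * Real.log (Qns f φ n ε r) : ℝ) : EReal)
            = (fun _ : ℕ => (0:EReal)) n := by
          filter_upwards [eventually_ge_atTop 1] with n hn
          rw [hQns n hn]
          simp
        rw [limsup_congr hev]
        exact limsup_const _
      rw [iSup_congr fun ε => iSup_congr fun hε => hPse ε hε]
      rw [biSup_const hIoi]
    have hP0 : P0 f φ = 0 := by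
      rw [P0]
      have hinner : ∀ ε ∈ Set.Ioi (0:ℝ), (atTop.limsup fun n : ℕ =>
          (((n : ℝ)⁻¹ * Real.log (Qn0 f φ n ε) : ℝ) : EReal)) = (0 : EReal) := by
        intro ε _
        have hev : ∀ᶠ (n : ℕ) in atTop, (((n : ℝ)⁻¹ * Real.log (Qn0 f φ n ε) : ℝ) : EReal)
            = (fun _ : ℕ => (0:EReal)) n := by
          filter_upwards [eventually_ge_atTop 1] with n hn
          rw [hQn0 n hn]
          simp
        rw [limsup_congr hev]
        exact limsup_const _
      rw [iSup_congr fun ε => iSup_congr fun hε => hinner ε hε]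
      rw [biSup_const hIoi]
    rw [hP0]
    have : (fun r : ℝ => Ps f φ r) = fun _ => (0 : EReal) := funext hPs
    rw [this]
    exact tendsto_const_nhds
  -- main case
  have hmc : 0 < Fintype.card (Fin m) := by simpa using hm
  obtain ⟨z, -, hz⟩ := isCompact_univ.exists_isMaxOn Set.univ_nonempty hφ.abs.continuousOn
  set B := |φ z| with hBdef
  have hB : ∀ x : X, |φ x| ≤ B := fun x => hz (Set.mem_univ x)
  have hmod : ∀ η : ℝ, 0 < η →
      ∃ δ : ℝ, 0 < δ ∧ ∀ a b : X, dist a b ≤ δ → |φ a - φ b| ≤ η := by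
    intro η hη
    obtain ⟨δ₀, hδ₀, hd⟩ := Metric.uniformContinuous_iff.1
      (CompactSpace.uniformContinuous_of_continuous hφ) η hη
    refine ⟨δ₀/2, half_pos hδ₀, fun a b hab => ?_⟩
    have h := hd (lt_of_le_of_lt hab (half_lt_self hδ₀))
    rw [Real.dist_eq] at h
    exact h.le
  have S1 : ∀ r ∈ Set.Ioi (0:ℝ), Ps f φ r ≤ P0 f φ := by
    intro r hr
    rw [Set.mem_Ioi] at hr
    rw [Ps]
    refine iSup₂_le fun ε hε => ?_
    have hε0 : 0 < ε := Set.mem_Ioi.1 hε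
    refine EReal.le_of_forall_le_add' fun η hη => ?_
    obtain ⟨δ, hδ0, hmodδ⟩ := hmod η hη
    set δ' := min δ (ε/4) with hδ'def
    have hδ'0 : 0 < δ' := lt_min hδ0 (by linarith)
    have hδ'ε : δ' ≤ ε/4 := min_le_right _ _
    have hmodδ' : ∀ a b : X, dist a b ≤ δ' → |φ a - φ b| ≤ η :=
      fun a b h => hmodδ a b (le_trans h (min_le_left _ _))
    have hev : ∀ᶠ (n:ℕ) in atTop, (n:ℝ)⁻¹ * Real.log (Qns f φ n ε r) ≤
        η + (n:ℝ)⁻¹ * Real.log (Qn0 f φ n δ') := by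
      filter_upwards [eventually_ge_atTop 1] with n hn
      have hn0 : (0:ℝ) < n := by exact_mod_cast hn
      have hQle := Qns_le_exp_mul_Qn0 (n := n) (r := r) hf hε0 hr hδ'0 hδ'ε hmodδ'
      have hQpos : 0 < Qns f φ n ε r := Qns_pos hf hB hε0 hr hmc
      have hQ0pos : 0 < Qn0 f φ n δ' := Qn0_pos hf hB hδ'0 hmc
      have hlog := Real.log_le_log hQpos hQle
      rw [Real.log_mul (Real.exp_pos _).ne' hQ0pos.ne', Real.log_exp] at hlog
      calc (n:ℝ)⁻¹ * Real.log (Qns f φ n ε r)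
          ≤ (n:ℝ)⁻¹ * ((n:ℝ) * η + Real.log (Qn0 f φ n δ')) :=
            mul_le_mul_of_nonneg_left hlog (inv_nonneg.2 hn0.le)
        _ = η + (n:ℝ)⁻¹ * Real.log (Qn0 f φ n δ') := by
            field_simp
    have h1 := limsup_coe_le_const_add _ _ η hev
    rw [Pse]
    refine h1.trans ?_
    refine add_le_add_right ?_ ((η : EReal))
    rw [P0]
    exact le_iSup₂ (f := fun ε' (_ : ε' ∈ Set.Ioi (0:ℝ)) => atTop.limsup fun n : ℕ =>
      (((n : ℝ)⁻¹ * Real.log (Qn0 f φ n ε') : ℝ) : EReal)) δ' (Set.mem_Ioi.2 hδ'0)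
  have S3 : AntitoneOn (fun r : ℝ => Ps f φ r) (Set.Ioi 0) := by
    intro r hr r' hr' hrr
    have hr0 : 0 < r := Set.mem_Ioi.1 hr
    have hr'0 : 0 < r' := Set.mem_Ioi.1 hr'
    simp only
    rw [Ps, Ps]
    refine iSup₂_mono fun ε hε => ?_
    have hε0 : 0 < ε := Set.mem_Ioi.1 hε
    rw [Pse, Pse]
    refine limsup_le_limsup (Eventually.of_forall fun n => ?_)
    refine EReal.coe_le_coe_iff.2 ?_
    refine mul_le_mul_of_nonneg_left ?_ (inv_nonneg.2 (Nat.cast_nonneg n))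
    exact Real.log_le_log (Qns_pos hf hB hε0 hr'0 hmc) (Qns_anti hf hB hε0 hr0 hrr)
  have S2 : P0 f φ ≤ sSup ((fun r : ℝ => Ps f φ r) '' Set.Ioi 0) := by
    rw [P0]
    refine iSup₂_le fun ε hε => ?_
    have hε0 : 0 < ε := Set.mem_Ioi.1 hε
    obtain ⟨F₀, hF₀span⟩ := exists_span0 (f := f) hf [(⟨0, hm⟩ : Fin m)]
      (show (0:ℝ) < ε/3 by linarith)
    have hF₀ : ∀ a : X, ∃ p ∈ F₀, dist a p ≤ ε/3 := by
      intro a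
      obtain ⟨y, hy, h⟩ := hF₀span a
      refine ⟨y, hy, ?_⟩
      have h0 := h 0 (by simp)
      simpa [fw] using h0
    refine EReal.le_of_forall_le_add' fun η hη => ?_
    set t : ℝ := max 1 (2 * (F₀.card:ℝ) / η) with htdef
    have ht : 1 ≤ t := le_max_left _ _
    have ht0 : (0:ℝ) < t := lt_of_lt_of_le one_pos ht
    have hlogt : 0 ≤ Real.log t := Real.log_nonneg ht
    set r : ℝ := η / (2 * (Real.log t + 1)) with hrdef
    have hr : 0 < r := div_pos hη (by linarith)
    have hKt : (F₀.card:ℝ)/t ≤ η/2 := by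
      rw [div_le_iff₀ ht0]
      have h2 : 2*(F₀.card:ℝ)/η ≤ t := le_max_right _ _
      have h3 := mul_le_mul_of_nonneg_left h2 (le_of_lt (half_pos hη))
      have h4 : η/2 * (2*(F₀.card:ℝ)/η) = (F₀.card:ℝ) := by
        field_simp
      linarith
    have hlog1 : Real.log (1 + (F₀.card:ℝ)/t) ≤ η/2 := by
      have hpos : (0:ℝ) < 1 + (F₀.card:ℝ)/t := by positivity
      have := Real.log_le_sub_one_of_pos hpos
      linarith
    have hrt : r * Real.log t ≤ η/2 := by
      rw [hrdef, div_mul_eq_mul_div, div_le_iff₀ (show (0:ℝ) < 2*(Real.log t+1) by linarith)]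
      have hx : η/2 * (2*(Real.log t+1)) = η * Real.log t + η := by ring
      linarith [hx.ge, hx.le]
    set c : ℝ := r * Real.log t + Real.log (1 + (F₀.card:ℝ)/t) with hcdef
    have hcη : c ≤ η := by rw [hcdef]; linarith
    have hev : ∀ᶠ (n:ℕ) in atTop, (n:ℝ)⁻¹ * Real.log (Qn0 f φ n ε) ≤
        c + (n:ℝ)⁻¹ * Real.log (Qns f φ n (ε/2) r) := by
      filter_upwards [eventually_ge_atTop 1] with n hn
      have hn0 : (0:ℝ) < n := by exact_mod_cast hn
      have hQ1 : Qn0 f φ n ε ≤ Qns0 f φ n ε := Qn0_le_Qns0 hf hB hε0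
      have hQ2 := Qns0_le_mul_Qns (n := n) hf hB hε0 hr ht hF₀
      have hp0 : 0 < Qn0 f φ n ε := Qn0_pos hf hB hε0 hmc
      have hp2 : 0 < Qns f φ n (ε/2) r := Qns_pos hf hB (half_pos hε0) hr hmc
      have hD1 : (0:ℝ) < t ^ (⌊r*(n:ℝ)⌋₊) := pow_pos ht0 _
      have hD2 : (0:ℝ) < (1 + (F₀.card:ℝ)/t) ^ n := pow_pos (by positivity) _
      have hlog := Real.log_le_log hp0 (hQ1.trans hQ2)
      rw [Real.log_mul (mul_pos hD1 hD2).ne' hp2.ne', Real.log_mul hD1.ne' hD2.ne',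
        Real.log_pow, Real.log_pow] at hlog
      have hfloor : ((⌊r*(n:ℝ)⌋₊ : ℕ):ℝ) ≤ r * n := Nat.floor_le (by positivity)
      have e1 : (n:ℝ)⁻¹ * ((⌊r*(n:ℝ)⌋₊:ℝ) * Real.log t) ≤ r * Real.log t := by
        have h5 : (n:ℝ)⁻¹ * ((⌊r*(n:ℝ)⌋₊:ℕ):ℝ) ≤ r := by
          rw [inv_mul_le_iff₀ hn0]
          linarith [hfloor, mul_comm r (n:ℝ)]
        calc (n:ℝ)⁻¹ * ((⌊r*(n:ℝ)⌋₊:ℝ) * Real.log t)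
            = ((n:ℝ)⁻¹ * ((⌊r*(n:ℝ)⌋₊:ℕ):ℝ)) * Real.log t := by ring
          _ ≤ r * Real.log t := mul_le_mul_of_nonneg_right h5 hlogt
      have e2 : (n:ℝ)⁻¹ * ((n:ℝ) * Real.log (1 + (F₀.card:ℝ)/t))
          = Real.log (1 + (F₀.card:ℝ)/t) := by
        field_simp
      have expand : (n:ℝ)⁻¹ * ((⌊r*(n:ℝ)⌋₊:ℝ) * Real.log t
            + (n:ℝ) * Real.log (1 + (F₀.card:ℝ)/t) + Real.log (Qns f φ n (ε/2) r))
          = (n:ℝ)⁻¹ * ((⌊r*(n:ℝ)⌋₊:ℝ) * Real.log t)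
            + (n:ℝ)⁻¹ * ((n:ℝ) * Real.log (1 + (F₀.card:ℝ)/t))
            + (n:ℝ)⁻¹ * Real.log (Qns f φ n (ε/2) r) := by ring
      have hstep := mul_le_mul_of_nonneg_left hlog (inv_nonneg.2 hn0.le)
      rw [expand] at hstep
      rw [hcdef]
      linarith [e1, e2.le, e2.ge]
    have h1 := limsup_coe_le_const_add _ _ c hev
    refine h1.trans ?_
    have h2 : atTop.limsup (fun n : ℕ =>
        (((n:ℝ)⁻¹ * Real.log (Qns f φ n (ε/2) r) : ℝ) : EReal))
        ≤ sSup ((fun r : ℝ => Ps f φ r) '' Set.Ioi 0) := by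
      have hPse : atTop.limsup (fun n : ℕ =>
          (((n:ℝ)⁻¹ * Real.log (Qns f φ n (ε/2) r) : ℝ) : EReal)) = Pse f φ (ε/2) r := rfl
      rw [hPse]
      refine le_trans ?_ (le_sSup ⟨r, Set.mem_Ioi.2 hr, rfl⟩)
      show Pse f φ (ε/2) r ≤ Ps f φ r
      rw [Ps]
      exact le_iSup₂ (f := fun ε' (_ : ε' ∈ Set.Ioi (0:ℝ)) => Pse f φ ε' r) (ε/2)
        (Set.mem_Ioi.2 (half_pos hε0))
    calc (c : EReal) + atTop.limsup (fun n : ℕ =>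
          (((n:ℝ)⁻¹ * Real.log (Qns f φ n (ε/2) r) : ℝ) : EReal))
        ≤ (c : EReal) + sSup ((fun r : ℝ => Ps f φ r) '' Set.Ioi 0) :=
          add_le_add_right h2 _
      _ ≤ (η : EReal) + sSup ((fun r : ℝ => Ps f φ r) '' Set.Ioi 0) :=
          add_le_add_left (EReal.coe_le_coe_iff.2 hcη) _
  have hb : BddAbove ((fun r : ℝ => Ps f φ r) '' Set.Ioi 0) := OrderTop.bddAbove _
  have hlim := S3.tendsto_nhdsGT hb
  have heq : sSup ((fun r : ℝ => Ps f φ r) '' Set.Ioi 0) = P0 f φ := by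
    refine le_antisymm (sSup_le ?_) S2
    rintro y ⟨r, hr, rfl⟩
    exact S1 r hr
  rwa [heq] at hlim
end

section
/- Let f_0,...,f_{m-1} be continuous self-maps of a compact metric space, φ,ψ continuous, 0<r<1. Then P^s_r(f_0,...,f_{m-1},φ+ψ) ≤ P^s_r(f_0,...,f_{m-1},φ) + P^s_r(f_0,...,f_{m-1},ψ) + log m. -/
open Filter Topology

section AuxProof

open Filter Metric

variable {X : Type*} [MetricSpace X]

lemma mySw_add {ι : Type*} (f : ι → X → X) (φ ψ : X → ℝ) (w : List ι) (x : X) :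
    Sw f (fun y => φ y + ψ y) w x = Sw f φ w x + Sw f ψ w x := by
  simp [Sw, Finset.sum_add_distrib]

lemma myAbsBound [CompactSpace X] {φ : X → ℝ} (hφ : Continuous φ) :
    ∃ M : ℝ, 0 ≤ M ∧ ∀ x, |φ x| ≤ M := by
  obtain ⟨M, hM⟩ := (isCompact_range hφ.abs).bddAbove
  exact ⟨max M 0, le_max_right _ _, fun x => le_max_of_le_left (hM (Set.mem_range_self x))⟩

lemma mySw_abs_le {ι : Type*} (f : ι → X → X) {φ : X → ℝ} {M : ℝ} (hM : ∀ x, |φ x| ≤ M)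
    (w : List ι) (x : X) : |Sw f φ w x| ≤ w.length * M := by
  calc |Sw f φ w x| ≤ ∑ i ∈ Finset.range w.length, |φ (fw f (w.take i) x)| :=
        Finset.abs_sum_le_sum_abs _ _
    _ ≤ ∑ _i ∈ Finset.range w.length, M := Finset.sum_le_sum fun i _ => hM _
    _ = w.length * M := by rw [Finset.sum_const, Finset.card_range, nsmul_eq_mul]

lemma mySepCard [CompactSpace X] {ι : Type*} (f : ι → X → X) (w : List ι) {ε r : ℝ}
    (hε : 0 < ε) (hr : 0 < r) :
    ∃ C : ℕ, ∀ E : Finset X, rSep f w ε r E → E.card ≤ C := by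
  set n := w.length with hn
  obtain ⟨t, ht, hcov⟩ := (Metric.totallyBounded_iff.mp
    (isCompact_univ.totallyBounded : TotallyBounded (Set.univ : Set (Fin n → X))))
    (ε / 2) (by linarith)
  refine ⟨ht.toFinset.card, fun E hE => ?_⟩
  set g : X → (Fin n → X) := fun x i => fw f (w.take i) x with hg
  have hch : ∀ x : X, ∃ y, y ∈ t ∧ g x ∈ Metric.ball y (ε / 2) := by
    intro x
    have := hcov (Set.mem_univ (g x))
    simpa using this
  choose c hc hcball using hch
  apply Finset.card_le_card_of_injOn (fun x => c x)
    (fun x _ => (Set.Finite.mem_toFinset ht).2 (hc x))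
  intro x hx y hy hxy
  by_contra hne
  have h := hE x hx y hy hne
  have hr0 : (0 : ℝ) ≤ r * n := by positivity
  have hpos : 0 < ((Finset.range n).filter
      (fun i => ε ≤ dist (fw f (w.take i) x) (fw f (w.take i) y))).card := by
    have h2 := lt_of_le_of_lt hr0 h
    exact_mod_cast h2
  obtain ⟨i, hi⟩ := Finset.card_pos.mp hpos
  rw [Finset.mem_filter, Finset.mem_range] at hi
  obtain ⟨hin, hid⟩ := hi
  set i' : Fin n := ⟨i, hin⟩ with hi'
  have h1 : dist (g x i') (g y i') ≤ dist (g x) (g y) := dist_le_pi_dist _ _ _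
  have h2 : dist (g x) (g y) ≤ dist (g x) (c x) + dist (c x) (g y) := dist_triangle _ _ _
  have h3 : dist (g x) (c x) < ε / 2 := Metric.mem_ball.mp (hcball x)
  have hxy' : c x = c y := hxy
  have h4 : dist (c x) (g y) < ε / 2 := by
    rw [hxy', dist_comm]
    exact Metric.mem_ball.mp (hcball y)
  have h5 : dist (g x i') (g y i') = dist (fw f (w.take i) x) (fw f (w.take i) y) := rfl
  linarith
set_option maxHeartbeats 1000000 in
lemma myQwsBdd [CompactSpace X] {ι : Type*} (f : ι → X → X) {φ : X → ℝ} {M : ℝ}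
    (hM : ∀ x, |φ x| ≤ M) (w : List ι) {ε r : ℝ} (hε : 0 < ε) (hr : 0 < r) :
    BddAbove {s : ℝ | ∃ E : Finset X, rSep f w ε r E ∧
      s = ∑ x ∈ E, Real.exp (Sw f φ w x)} := by
  obtain ⟨C, hC⟩ := mySepCard f w hε hr
  refine ⟨C * Real.exp (w.length * M), ?_⟩
  rintro s ⟨E, hE, rfl⟩
  calc ∑ x ∈ E, Real.exp (Sw f φ w x) ≤ ∑ _x ∈ E, Real.exp (w.length * M) :=
        Finset.sum_le_sum fun x _ =>
          Real.exp_le_exp.2 ((abs_le.1 (mySw_abs_le f hM w x)).2)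
    _ = E.card * Real.exp (w.length * M) := by rw [Finset.sum_const, nsmul_eq_mul]
    _ ≤ C * Real.exp (w.length * M) := by
        apply mul_le_mul_of_nonneg_right _ (Real.exp_nonneg _)
        exact_mod_cast hC E hE

lemma myQwsMem0 {ι : Type*} (f : ι → X → X) (φ : X → ℝ) (w : List ι) (ε r : ℝ) :
    (0 : ℝ) ∈ {s : ℝ | ∃ E : Finset X, rSep f w ε r E ∧
      s = ∑ x ∈ E, Real.exp (Sw f φ w x)} :=
  ⟨∅, fun x hx => absurd hx (Finset.notMem_empty x), by simp⟩

lemma myQwsSingleton {ι : Type*} (f : ι → X → X) (φ : X → ℝ) (w : List ι) (ε r : ℝ)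
    (x₀ : X) : Real.exp (Sw f φ w x₀) ∈ {s : ℝ | ∃ E : Finset X, rSep f w ε r E ∧
      s = ∑ x ∈ E, Real.exp (Sw f φ w x)} := by
  refine ⟨{x₀}, ?_, (Finset.sum_singleton _ _).symm⟩
  intro x hx y hy hxy
  rw [Finset.mem_singleton] at hx hy
  exact absurd (hx.trans hy.symm) hxy

lemma myQws_nonneg [CompactSpace X] {ι : Type*} (f : ι → X → X) {φ : X → ℝ} {M : ℝ}
    (hM : ∀ x, |φ x| ≤ M) (w : List ι) {ε r : ℝ} (hε : 0 < ε) (hr : 0 < r) :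
    0 ≤ Qws f φ w ε r :=
  le_csSup (myQwsBdd f hM w hε hr) (myQwsMem0 f φ w ε r)

lemma myQws_ge [CompactSpace X] {ι : Type*} (f : ι → X → X) {φ : X → ℝ} {M : ℝ}
    (hM : ∀ x, |φ x| ≤ M) (w : List ι) {ε r : ℝ} (hε : 0 < ε) (hr : 0 < r) (x₀ : X) :
    Real.exp (-(w.length * M)) ≤ Qws f φ w ε r := by
  calc Real.exp (-(w.length * M)) ≤ Real.exp (Sw f φ w x₀) :=
        Real.exp_le_exp.2 ((abs_le.1 (mySw_abs_le f hM w x₀)).1)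
    _ ≤ Qws f φ w ε r := le_csSup (myQwsBdd f hM w hε hr) (myQwsSingleton f φ w ε r x₀)

lemma mySumMul {α : Type*} (s : Finset α) (a b : α → ℝ) (ha : ∀ x ∈ s, 0 ≤ a x)
    (hb : ∀ x ∈ s, 0 ≤ b x) :
    ∑ x ∈ s, a x * b x ≤ (∑ x ∈ s, a x) * ∑ x ∈ s, b x := by
  rw [Finset.sum_mul]
  exact Finset.sum_le_sum fun x hx =>
    mul_le_mul_of_nonneg_left (Finset.single_le_sum hb hx) (ha x hx)

lemma myQws_mul [CompactSpace X] {ι : Type*} (f : ι → X → X) {φ ψ : X → ℝ} {Mφ Mψ : ℝ}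
    (hMφ : ∀ x, |φ x| ≤ Mφ) (hMψ : ∀ x, |ψ x| ≤ Mψ) (w : List ι) {ε r : ℝ}
    (hε : 0 < ε) (hr : 0 < r) :
    Qws f (fun x => φ x + ψ x) w ε r ≤ Qws f φ w ε r * Qws f ψ w ε r := by
  apply csSup_le ⟨0, myQwsMem0 f _ w ε r⟩
  rintro s ⟨E, hE, rfl⟩
  have h1 : ∑ x ∈ E, Real.exp (Sw f (fun x => φ x + ψ x) w x)
      = ∑ x ∈ E, Real.exp (Sw f φ w x) * Real.exp (Sw f ψ w x) := by
    refine Finset.sum_congr rfl fun x _ => ?_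
    rw [mySw_add, Real.exp_add]
  rw [h1]
  calc ∑ x ∈ E, Real.exp (Sw f φ w x) * Real.exp (Sw f ψ w x)
      ≤ (∑ x ∈ E, Real.exp (Sw f φ w x)) * ∑ x ∈ E, Real.exp (Sw f ψ w x) :=
        mySumMul _ _ _ (fun x _ => (Real.exp_pos _).le) (fun x _ => (Real.exp_pos _).le)
    _ ≤ Qws f φ w ε r * Qws f ψ w ε r := by
        apply mul_le_mul
          (le_csSup (myQwsBdd f hMφ w hε hr) ⟨E, hE, rfl⟩)
          (le_csSup (myQwsBdd f hMψ w hε hr) ⟨E, hE, rfl⟩)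
          (Finset.sum_nonneg fun x _ => (Real.exp_pos _).le)
          (myQws_nonneg f hMφ w hε hr)

lemma myQns_ge [CompactSpace X] {m : ℕ} (hm : 0 < m) (f : Fin m → X → X) {φ : X → ℝ}
    {M : ℝ} (hM : ∀ x, |φ x| ≤ M) (n : ℕ) {ε r : ℝ} (hε : 0 < ε) (hr : 0 < r) (x₀ : X) :
    Real.exp (-(n * M)) ≤ Qns f φ n ε r := by
  have hm' : (0 : ℝ) < (m : ℝ) ^ n := by positivity
  have hcard : (Finset.univ : Finset (Fin n → Fin m)).card = m ^ n := by
    rw [Finset.card_univ, Fintype.card_fun, Fintype.card_fin, Fintype.card_fin]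
  have hsum : ((m : ℝ) ^ n) * Real.exp (-(n * M))
      ≤ ∑ σ : Fin n → Fin m, Qws f φ (List.ofFn σ) ε r := by
    calc ((m : ℝ) ^ n) * Real.exp (-(n * M))
        = ∑ _σ : Fin n → Fin m, Real.exp (-(n * M)) := by
          rw [Finset.sum_const, hcard, nsmul_eq_mul]
          push_cast
          ring
      _ ≤ _ := by
          refine Finset.sum_le_sum fun σ _ => ?_
          have := myQws_ge f hM (List.ofFn σ) hε hr x₀
          rwa [List.length_ofFn] at this
  unfold Qns
  rw [Fintype.card_fin]
  calc Real.exp (-(n * M)) = (1 / (m : ℝ) ^ n) * ((m : ℝ) ^ n * Real.exp (-(n * M))) := by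
        field_simp
    _ ≤ _ := mul_le_mul_of_nonneg_left hsum (by positivity)

lemma myQns_mul [CompactSpace X] {m : ℕ} (hm : 0 < m) (f : Fin m → X → X) {φ ψ : X → ℝ}
    {Mφ Mψ : ℝ} (hMφ : ∀ x, |φ x| ≤ Mφ) (hMψ : ∀ x, |ψ x| ≤ Mψ) (n : ℕ) {ε r : ℝ}
    (hε : 0 < ε) (hr : 0 < r) :
    Qns f (fun x => φ x + ψ x) n ε r ≤ (m : ℝ) ^ n * (Qns f φ n ε r * Qns f ψ n ε r) := by
  have hm' : (0 : ℝ) < (m : ℝ) ^ n := by positivity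
  unfold Qns
  rw [Fintype.card_fin]
  have h1 : ∑ σ : Fin n → Fin m, Qws f (fun x => φ x + ψ x) (List.ofFn σ) ε r
      ≤ (∑ σ : Fin n → Fin m, Qws f φ (List.ofFn σ) ε r) *
        ∑ σ : Fin n → Fin m, Qws f ψ (List.ofFn σ) ε r := by
    calc ∑ σ : Fin n → Fin m, Qws f (fun x => φ x + ψ x) (List.ofFn σ) ε r
        ≤ ∑ σ : Fin n → Fin m, Qws f φ (List.ofFn σ) ε r * Qws f ψ (List.ofFn σ) ε r :=
          Finset.sum_le_sum fun σ _ => myQws_mul f hMφ hMψ _ hε hr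
      _ ≤ _ := mySumMul _ _ _ (fun σ _ => myQws_nonneg f hMφ _ hε hr)
          (fun σ _ => myQws_nonneg f hMψ _ hε hr)
  calc (1 / (m : ℝ) ^ n) * ∑ σ : Fin n → Fin m, Qws f (fun x => φ x + ψ x) (List.ofFn σ) ε r
      ≤ (1 / (m : ℝ) ^ n) * ((∑ σ : Fin n → Fin m, Qws f φ (List.ofFn σ) ε r) *
          ∑ σ : Fin n → Fin m, Qws f ψ (List.ofFn σ) ε r) :=
        mul_le_mul_of_nonneg_left h1 (by positivity)
    _ = (m : ℝ) ^ n * (((1 / (m : ℝ) ^ n) * ∑ σ : Fin n → Fin m, Qws f φ (List.ofFn σ) ε r) *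
          ((1 / (m : ℝ) ^ n) * ∑ σ : Fin n → Fin m, Qws f ψ (List.ofFn σ) ε r)) := by
        field_simp

lemma myPs_zero {X : Type*} [MetricSpace X] {m : ℕ} (f : Fin m → X → X) (g : X → ℝ) (r : ℝ)
    (h : ∀ (n : ℕ) (ε : ℝ), 0 < ε → (n : ℝ)⁻¹ * Real.log (Qns f g n ε r) = 0) :
    Ps f g r = 0 := by
  unfold Ps Pse
  have hls : ∀ ε ∈ Set.Ioi (0 : ℝ), (atTop.limsup fun n : ℕ =>
      (((n : ℝ)⁻¹ * Real.log (Qns f g n ε r) : ℝ) : EReal)) = (0 : EReal) := by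
    intro ε hε
    have heq : (fun n : ℕ => (((n : ℝ)⁻¹ * Real.log (Qns f g n ε r) : ℝ) : EReal)) =
        fun _ => (0 : EReal) := by
      funext n
      rw [h n ε hε]
      rfl
    rw [heq, Filter.limsup_const]
  apply le_antisymm
  · exact iSup₂_le fun ε hε => (hls ε hε).le
  · refine le_trans ?_ (le_iSup₂ (f := fun ε (_ : ε ∈ Set.Ioi (0:ℝ)) => atTop.limsup
      fun n : ℕ => (((n : ℝ)⁻¹ * Real.log (Qns f g n ε r) : ℝ) : EReal)) 1
      (by norm_num : (1:ℝ) ∈ Set.Ioi (0:ℝ)))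
    rw [hls 1 (by norm_num)]

end AuxProof

theorem Ps_add_potentials
    {X : Type*} [MetricSpace X] [CompactSpace X] {m : ℕ}
    (f : Fin m → X → X) (hf : ∀ i, Continuous (f i))
    (φ ψ : X → ℝ) (hφ : Continuous φ) (hψ : Continuous ψ)
    (r : ℝ) (hr0 : 0 < r) (hr1 : r < 1) :
    Ps f (fun x => φ x + ψ x) r ≤
      Ps f φ r + Ps f ψ r + ((Real.log m : ℝ) : EReal) := by
  rcases isEmpty_or_nonempty X with hX | hX
  · -- empty space: everything is zero
    have hz : ∀ g : X → ℝ, Ps f g r = 0 := by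
      intro g
      apply myPs_zero
      intro n ε hε
      have hq : ∀ σ : Fin n → Fin m, Qws f g (List.ofFn σ) ε r = 0 := by
        intro σ
        have : {s : ℝ | ∃ E : Finset X, rSep f (List.ofFn σ) ε r E ∧
            s = ∑ x ∈ E, Real.exp (Sw f g (List.ofFn σ) x)} = {0} := by
          ext s
          simp only [Set.mem_setOf_eq, Set.mem_singleton_iff]
          constructor
          · rintro ⟨E, _, rfl⟩
            have hE : E = ∅ := Finset.eq_empty_of_forall_notMem fun x _ => (hX.elim x)
            simp [hE]
          · rintro rfl
            exact ⟨∅, fun x hx => absurd hx (Finset.notMem_empty x), by simp⟩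
        unfold Qws
        rw [this, csSup_singleton]
      unfold Qns
      rw [Finset.sum_congr rfl fun σ _ => hq σ]
      simp
    rw [hz, hz, hz]
    simp only [zero_add]
    rcases Nat.eq_zero_or_pos m with rfl | hm
    · simp
    · have : (0 : ℝ) ≤ Real.log m := Real.log_nonneg (by exact_mod_cast hm)
      exact_mod_cast this
  rcases Nat.eq_zero_or_pos m with rfl | hm
  · -- m = 0
    have hz : ∀ g : X → ℝ, Ps f g r = 0 := by
      intro g
      apply myPs_zero
      intro n ε hε
      rcases Nat.eq_zero_or_pos n with rfl | hn
      · simp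
      · have : Qns f g n ε r = 0 := by
          unfold Qns
          rw [Fintype.card_fin]
          simp [zero_pow hn.ne']
        rw [this, Real.log_zero, mul_zero]
    rw [hz, hz, hz]
    simp
  -- main case: m ≥ 1, X nonempty
  obtain ⟨x₀⟩ := hX
  obtain ⟨Mφ, hMφ0, hMφ⟩ := myAbsBound hφ
  obtain ⟨Mψ, hMψ0, hMψ⟩ := myAbsBound hψ
  have hMφψ : ∀ x, |φ x + ψ x| ≤ Mφ + Mψ := fun x =>
    (abs_add_le _ _).trans (add_le_add (hMφ x) (hMψ x))
  show Ps f (fun x => φ x + ψ x) r ≤ _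
  unfold Ps
  apply iSup₂_le
  intro ε hε
  have hε' : (0 : ℝ) < ε := hε
  set c : EReal := ((Real.log m : ℝ) : EReal) with hc
  set v : ℕ → EReal := fun n => (((n : ℝ)⁻¹ * Real.log (Qns f φ n ε r) : ℝ) : EReal) with hv
  set w : ℕ → EReal := fun n => (((n : ℝ)⁻¹ * Real.log (Qns f ψ n ε r) : ℝ) : EReal) with hw
  -- pointwise bound
  have hreal : ∀ n : ℕ, (n : ℝ)⁻¹ * Real.log (Qns f (fun x => φ x + ψ x) n ε r) ≤
      ((n : ℝ)⁻¹ * Real.log (Qns f φ n ε r) + (n : ℝ)⁻¹ * Real.log (Qns f ψ n ε r))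
        + Real.log m := by
    intro n
    rcases Nat.eq_zero_or_pos n with rfl | hn
    · simp only [Nat.cast_zero, inv_zero, zero_mul, add_zero, zero_add]
      exact Real.log_nonneg (by exact_mod_cast hm)
    · have hn' : (0 : ℝ) < n := by exact_mod_cast hn
      have hP : 0 < Qns f (fun x => φ x + ψ x) n ε r :=
        lt_of_lt_of_le (Real.exp_pos _) (myQns_ge hm f hMφψ n hε' hr0 x₀)
      have hQ1 : 0 < Qns f φ n ε r :=
        lt_of_lt_of_le (Real.exp_pos _) (myQns_ge hm f hMφ n hε' hr0 x₀)
      have hQ2 : 0 < Qns f ψ n ε r :=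
        lt_of_lt_of_le (Real.exp_pos _) (myQns_ge hm f hMψ n hε' hr0 x₀)
      have hle := myQns_mul hm f hMφ hMψ n hε' hr0
      have hlog := Real.log_le_log hP hle
      have hm' : ((m : ℝ)) ^ n ≠ 0 := by positivity
      rw [Real.log_mul hm' (mul_pos hQ1 hQ2).ne', Real.log_mul hQ1.ne' hQ2.ne',
        Real.log_pow] at hlog
      have h2 := mul_le_mul_of_nonneg_left hlog (inv_nonneg.2 hn'.le)
      have h3 : (n : ℝ)⁻¹ * ((n : ℝ) * Real.log m +
          (Real.log (Qns f φ n ε r) + Real.log (Qns f ψ n ε r)))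
          = ((n : ℝ)⁻¹ * Real.log (Qns f φ n ε r) +
            (n : ℝ)⁻¹ * Real.log (Qns f ψ n ε r)) + Real.log m := by
        field_simp
        ring
      push_cast at h2 h3 ⊢
      linarith
  have hpt : ∀ n : ℕ,
      (((n : ℝ)⁻¹ * Real.log (Qns f (fun x => φ x + ψ x) n ε r : ℝ) : ℝ) : EReal)
        ≤ ((fun n : ℕ => v n + w n) + (fun _ : ℕ => c)) n := by
    intro n
    have h4 := hreal n
    calc (((n : ℝ)⁻¹ * Real.log (Qns f (fun x => φ x + ψ x) n ε r : ℝ) : ℝ) : EReal)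
        ≤ ((((n : ℝ)⁻¹ * Real.log (Qns f φ n ε r) + (n : ℝ)⁻¹ * Real.log (Qns f ψ n ε r))
            + Real.log m : ℝ) : EReal) := EReal.coe_le_coe_iff.2 h4
      _ = ((fun n : ℕ => v n + w n) + (fun _ : ℕ => c)) n := by
          rw [EReal.coe_add, EReal.coe_add]
          rfl
  -- lower bounds, non-bot limsups
  have hlb : ∀ (g : X → ℝ) (M : ℝ), 0 ≤ M → (∀ x, |g x| ≤ M) →
      Filter.atTop.limsup (fun n : ℕ =>
        (((n : ℝ)⁻¹ * Real.log (Qns f g n ε r) : ℝ) : EReal)) ≠ ⊥ := by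
    intro g M hM0 hM
    have hge : ∀ n : ℕ, ((-M : ℝ) : EReal) ≤
        (((n : ℝ)⁻¹ * Real.log (Qns f g n ε r) : ℝ) : EReal) := by
      intro n
      rw [EReal.coe_le_coe_iff]
      rcases Nat.eq_zero_or_pos n with rfl | hn
      · simp only [Nat.cast_zero, inv_zero, zero_mul]
        linarith
      · have hn' : (0 : ℝ) < n := by exact_mod_cast hn
        have hge := myQns_ge hm f hM n hε' hr0 x₀
        have hlg : -((n : ℝ) * M) ≤ Real.log (Qns f g n ε r) := by
          have := Real.log_le_log (Real.exp_pos _) hge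
          rwa [Real.log_exp] at this
        calc -M = (n : ℝ)⁻¹ * (-((n : ℝ) * M)) := by
              field_simp
          _ ≤ _ := mul_le_mul_of_nonneg_left hlg (inv_nonneg.2 hn'.le)
    have hle : ((-M : ℝ) : EReal) ≤ Filter.atTop.limsup (fun n : ℕ =>
        (((n : ℝ)⁻¹ * Real.log (Qns f g n ε r) : ℝ) : EReal)) := by
      calc ((-M : ℝ) : EReal)
          = Filter.atTop.limsup (fun _ : ℕ => ((-M : ℝ) : EReal)) :=
            (Filter.limsup_const _).symm
        _ ≤ _ := Filter.limsup_le_limsup (Filter.Eventually.of_forall hge)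
    intro hbot
    rw [hbot] at hle
    exact (EReal.bot_lt_coe _).not_ge hle
  have hvbot : Filter.atTop.limsup v ≠ ⊥ := hlb φ Mφ hMφ0 hMφ
  have hwbot : Filter.atTop.limsup w ≠ ⊥ := hlb ψ Mψ hMψ0 hMψ
  -- limsup estimates
  have step1 : Filter.atTop.limsup (fun n : ℕ =>
      (((n : ℝ)⁻¹ * Real.log (Qns f (fun x => φ x + ψ x) n ε r) : ℝ) : EReal))
      ≤ Filter.atTop.limsup ((fun n : ℕ => v n + w n) + (fun _ : ℕ => c)) :=
    Filter.limsup_le_limsup (Filter.Eventually.of_forall hpt)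
  have step2 : Filter.atTop.limsup ((fun n : ℕ => v n + w n) + (fun _ : ℕ => c))
      ≤ Filter.atTop.limsup (fun n => v n + w n) + c := by
    have h6 := EReal.limsup_add_le (f := Filter.atTop)
      (u := fun n => v n + w n) (v := fun _ : ℕ => c)
      (Or.inr (by rw [Filter.limsup_const]; exact EReal.coe_ne_top _))
      (Or.inr (by rw [Filter.limsup_const]; exact EReal.coe_ne_bot _))
    rwa [Filter.limsup_const] at h6
  have step3 : Filter.atTop.limsup (fun n => v n + w n)
      ≤ Filter.atTop.limsup v + Filter.atTop.limsup w := by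
    have h7 := EReal.limsup_add_le (f := Filter.atTop) (u := v) (v := w)
      (Or.inl hvbot) (Or.inr hwbot)
    exact h7
  have hfinal : Filter.atTop.limsup (fun n : ℕ =>
      (((n : ℝ)⁻¹ * Real.log (Qns f (fun x => φ x + ψ x) n ε r) : ℝ) : EReal))
      ≤ (Filter.atTop.limsup v + Filter.atTop.limsup w) + c :=
    step1.trans (step2.trans (add_le_add_left step3 c))
  refine hfinal.trans ?_
  have hPseφ : Filter.atTop.limsup v ≤ Ps f φ r :=
    le_iSup₂ (f := fun ε' (_ : ε' ∈ Set.Ioi (0:ℝ)) => Pse f φ ε' r) ε hε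
  have hPseψ : Filter.atTop.limsup w ≤ Ps f ψ r :=
    le_iSup₂ (f := fun ε' (_ : ε' ∈ Set.Ioi (0:ℝ)) => Pse f ψ ε' r) ε hε
  exact add_le_add (add_le_add hPseφ hPseψ) le_rfl
end

section
/- Let (X_1,d_1),(X_2,d_2) be compact metric spaces, f_0,...,f_{m-1} continuous self-maps of X_1, g_0,...,g_{m-1} continuous self-maps of X_2, and π: X_1 → X_2 a continuous surjection satisfying π∘f_i = g_i∘π for all i. Then for every continuous φ on X_2 and 0<r<1, P_r(g_0,...,g_{m-1},φ) ≤ P_r(f_0,...,f_{m-1},φ∘π). If moreover π is a homeomorphism, equality holds. -/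
open Filter Topology

section Helpers

variable {ι : Type*}

lemma continuous_fw {X : Type*} [TopologicalSpace X] {f : ι → X → X}
    (hf : ∀ i, Continuous (f i)) : ∀ w : List ι, Continuous (fw f w)
  | [] => continuous_id
  | (a :: l) => by
      have h : fw f (a :: l) = (fw f l) ∘ (f a) := rfl
      rw [h]; exact (continuous_fw hf l).comp (hf a)

lemma fw_semiconj {X₁ X₂ : Type*} {f : ι → X₁ → X₁} {g : ι → X₂ → X₂} {π : X₁ → X₂}
    (hsemi : ∀ i, π ∘ f i = g i ∘ π) : ∀ (w : List ι) (x : X₁), fw g w (π x) = π (fw f w x)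
  | [], x => rfl
  | (a :: l), x => by
      have h1 : g a (π x) = π (f a x) := (congrFun (hsemi a) x).symm
      show fw g l (g a (π x)) = π (fw f l (f a x))
      rw [h1]; exact fw_semiconj hsemi l (f a x)

lemma Sw_semiconj {X₁ X₂ : Type*} {f : ι → X₁ → X₁} {g : ι → X₂ → X₂} {π : X₁ → X₂}
    (hsemi : ∀ i, π ∘ f i = g i ∘ π) (φ : X₂ → ℝ) (w : List ι) (x : X₁) :
    Sw g φ w (π x) = Sw f (φ ∘ π) w x := by
  unfold Sw
  exact Finset.sum_congr rfl fun i _ => by rw [fw_semiconj hsemi]; rfl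

lemma sum_image_le' {X₁ X₂ : Type*} [DecidableEq X₂] (h : X₁ → X₂) (F : Finset X₁)
    (G : X₂ → ℝ) (hG : ∀ y, 0 ≤ G y) :
    ∑ y ∈ F.image h, G y ≤ ∑ x ∈ F, G (h x) := by
  classical
  calc ∑ y ∈ F.image h, G y
      ≤ ∑ y ∈ F.image h, ∑ x ∈ F.filter (fun x => h x = y), G (h x) := by
        refine Finset.sum_le_sum fun y hy => ?_
        obtain ⟨x, hxF, rfl⟩ := Finset.mem_image.1 hy
        have hx : x ∈ F.filter (fun z => h z = h x) := Finset.mem_filter.2 ⟨hxF, rfl⟩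
        exact Finset.single_le_sum (fun z _ => hG _) hx |>.trans_eq rfl
    _ = ∑ x ∈ F, G (h x) :=
        Finset.sum_fiberwise_of_maps_to (fun x hx => Finset.mem_image_of_mem _ hx) _

lemma exists_span {X : Type*} [MetricSpace X] [CompactSpace X] {f : ι → X → X}
    (hf : ∀ i, Continuous (f i)) (w : List ι) {ε : ℝ} (hε : 0 < ε) :
    ∃ F : Finset X, ∀ x : X, ∃ y ∈ F, ∀ i < w.length,
      dist (fw f (w.take i) x) (fw f (w.take i) y) < ε := by
  set U : X → Set X := fun y =>
    {x | ∀ i < w.length, dist (fw f (w.take i) x) (fw f (w.take i) y) < ε} with hU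
  have hUopen : ∀ y, IsOpen (U y) := by
    intro y
    have h : U y = ⋂ i ∈ Set.Iio w.length,
        {x | dist (fw f (w.take i) x) (fw f (w.take i) y) < ε} := by
      ext x; simp [hU, Set.mem_iInter]
    rw [h]
    exact (Set.finite_Iio _).isOpen_biInter fun i _ =>
      isOpen_lt (Continuous.dist (continuous_fw hf _) continuous_const) continuous_const
  have hcover : Set.univ ⊆ ⋃ y : X, U y := fun x _ =>
    Set.mem_iUnion.2 ⟨x, fun i _ => by simpa using hε⟩
  obtain ⟨t, ht⟩ := isCompact_univ.elim_finite_subcover U hUopen hcover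
  refine ⟨t, fun x => ?_⟩
  obtain ⟨y, hy1, hy2⟩ := Set.mem_iUnion₂.1 (ht (Set.mem_univ x))
  exact ⟨y, hy1, hy2⟩

lemma exists_rSpan {X : Type*} [MetricSpace X] [CompactSpace X] {f : ι → X → X}
    (hf : ∀ i, Continuous (f i)) {w : List ι} {ε r : ℝ} (hε : 0 < ε) (hr0 : 0 < r)
    (hw : 0 < w.length) : ∃ F : Finset X, rSpan f w ε r F := by
  obtain ⟨F, hF⟩ := exists_span hf w hε
  refine ⟨F, fun x => ?_⟩
  obtain ⟨y, hyF, hy⟩ := hF x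
  refine ⟨y, hyF, ?_⟩
  have heq : (Finset.range w.length).filter
      (fun i => dist (fw f (w.take i) x) (fw f (w.take i) y) < ε) = Finset.range w.length :=
    Finset.filter_true_of_mem fun i hi => hy i (Finset.mem_range.1 hi)
  rw [heq, Finset.card_range]
  have hn : (0:ℝ) < w.length := by exact_mod_cast hw
  nlinarith

lemma Qw_bddBelow {X : Type*} [MetricSpace X] (f : ι → X → X) (φ : X → ℝ) (w : List ι)
    (ε r : ℝ) : BddBelow {s : ℝ | ∃ F : Finset X, rSpan f w ε r F ∧
      s = ∑ x ∈ F, Real.exp (Sw f φ w x)} := by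
  refine ⟨0, ?_⟩
  rintro s ⟨F, -, rfl⟩
  exact Finset.sum_nonneg fun x _ => (Real.exp_pos _).le

lemma Qw_ge {X : Type*} [MetricSpace X] [CompactSpace X] [Nonempty X] {f : ι → X → X}
    (hf : ∀ i, Continuous (f i)) {φ : X → ℝ} {C : ℝ} (hC : ∀ x, -C ≤ φ x)
    {w : List ι} {ε r : ℝ} (hε : 0 < ε) (hr0 : 0 < r) (hw : 0 < w.length) :
    Real.exp (-(w.length * C)) ≤ Qw f φ w ε r := by
  apply le_csInf
  · obtain ⟨F, hF⟩ := exists_rSpan hf hε hr0 hw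
    exact ⟨_, F, hF, rfl⟩
  · rintro s ⟨F, hF, rfl⟩
    obtain ⟨y, hyF, -⟩ := hF (Classical.arbitrary X)
    have h1 : -((w.length : ℝ) * C) ≤ Sw f φ w y := by
      have h2 : ∑ i ∈ Finset.range w.length, (-C) ≤ Sw f φ w y :=
        Finset.sum_le_sum fun i _ => hC _
      have h3 : ∑ i ∈ Finset.range w.length, (-C) = -((w.length : ℝ) * C) := by
        simp [Finset.sum_const, Finset.card_range]
      linarith
    calc Real.exp (-(w.length * C)) ≤ Real.exp (Sw f φ w y) := Real.exp_le_exp.2 h1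
      _ ≤ ∑ x ∈ F, Real.exp (Sw f φ w x) :=
        Finset.single_le_sum (fun x _ => (Real.exp_pos _).le) hyF

end Helpers

section Helpers2

variable {ι : Type*}

lemma Qw_le_Qw {X₁ : Type*} [MetricSpace X₁] [CompactSpace X₁]
    {X₂ : Type*} [MetricSpace X₂]
    {f : ι → X₁ → X₁} (hf : ∀ i, Continuous (f i)) {g : ι → X₂ → X₂} {π : X₁ → X₂}
    (hπs : Function.Surjective π) (hsemi : ∀ i, π ∘ f i = g i ∘ π)
    (φ : X₂ → ℝ) {w : List ι} {ε δ r : ℝ} (hδ : 0 < δ) (hr0 : 0 < r) (hw : 0 < w.length)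
    (hδε : ∀ a b : X₁, dist a b < δ → dist (π a) (π b) < ε) :
    Qw g φ w ε r ≤ Qw f (φ ∘ π) w δ r := by
  classical
  apply le_csInf
  · obtain ⟨F, hF⟩ := exists_rSpan hf hδ hr0 hw
    exact ⟨_, F, hF, rfl⟩
  · rintro s ⟨F, hF, rfl⟩
    have hspan : rSpan g w ε r (F.image π) := by
      intro y
      obtain ⟨x, rfl⟩ := hπs y
      obtain ⟨z, hzF, hcard⟩ := hF x
      refine ⟨π z, Finset.mem_image_of_mem _ hzF, lt_of_lt_of_le hcard ?_⟩
      have hsub : (Finset.range w.length).filter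
            (fun i => dist (fw f (w.take i) x) (fw f (w.take i) z) < δ) ⊆
          (Finset.range w.length).filter
            (fun i => dist (fw g (w.take i) (π x)) (fw g (w.take i) (π z)) < ε) := by
        apply Finset.monotone_filter_right
        intro i _ hi
        rw [fw_semiconj hsemi, fw_semiconj hsemi]
        exact hδε _ _ hi
      exact_mod_cast Finset.card_le_card hsub
    have h1 : Qw g φ w ε r ≤ ∑ y ∈ F.image π, Real.exp (Sw g φ w y) :=
      csInf_le (Qw_bddBelow g φ w ε r) ⟨F.image π, hspan, rfl⟩
    refine h1.trans ?_
    calc ∑ y ∈ F.image π, Real.exp (Sw g φ w y)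
        ≤ ∑ x ∈ F, Real.exp (Sw g φ w (π x)) :=
          sum_image_le' π F _ (fun y => (Real.exp_pos _).le)
      _ = ∑ x ∈ F, Real.exp (Sw f (φ ∘ π) w x) :=
          Finset.sum_congr rfl fun x _ => by rw [Sw_semiconj hsemi]

lemma Qw_empty {X : Type*} [MetricSpace X] [IsEmpty X] (f : ι → X → X) (φ : X → ℝ)
    (w : List ι) (ε r : ℝ) : Qw f φ w ε r = 0 := by
  have h : {s : ℝ | ∃ F : Finset X, rSpan f w ε r F ∧
      s = ∑ x ∈ F, Real.exp (Sw f φ w x)} = {0} := by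
    ext s
    simp only [Set.mem_setOf_eq, Set.mem_singleton_iff]
    constructor
    · rintro ⟨F, -, rfl⟩
      rw [Finset.eq_empty_of_isEmpty F, Finset.sum_empty]
    · rintro rfl
      exact ⟨∅, fun x => isEmptyElim x, by simp⟩
  rw [Qw, h, csInf_singleton]

lemma Pr_eq_zero_aux {X : Type*} [MetricSpace X] [Fintype ι] (f : ι → X → X) (φ : X → ℝ)
    (r : ℝ) (h : ∀ ε > (0:ℝ), ∀ᶠ n : ℕ in atTop, Qn f φ n ε r = 0) : Pr f φ r = 0 := by
  rw [Pr]
  have h0 : ∀ ε ∈ Set.Ioi (0:ℝ),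
      (atTop.limsup fun n : ℕ => (((n : ℝ)⁻¹ * Real.log (Qn f φ n ε r) : ℝ) : EReal))
        = (0 : EReal) := by
    intro ε hε
    have heq : (fun n : ℕ => (((n : ℝ)⁻¹ * Real.log (Qn f φ n ε r) : ℝ) : EReal))
        =ᶠ[atTop] (fun _ => (0:EReal)) := (h ε hε).mono fun n hn => by simp [hn]
    rw [limsup_congr heq, limsup_const]
  calc ⨆ ε ∈ Set.Ioi (0:ℝ),
        atTop.limsup (fun n : ℕ => (((n : ℝ)⁻¹ * Real.log (Qn f φ n ε r) : ℝ) : EReal))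
      = ⨆ ε ∈ Set.Ioi (0:ℝ), (0:EReal) :=
        iSup_congr fun ε => iSup_congr fun hε => h0 ε hε
    _ = 0 := biSup_const ⟨1, by norm_num⟩

end Helpers2

lemma Pr_key_le
    {X₁ : Type*} [MetricSpace X₁] [CompactSpace X₁]
    {X₂ : Type*} [MetricSpace X₂] [CompactSpace X₂] {m : ℕ}
    (f : Fin m → X₁ → X₁) (hf : ∀ i, Continuous (f i))
    (g : Fin m → X₂ → X₂) (hg : ∀ i, Continuous (g i))
    (π : X₁ → X₂) (hπc : Continuous π) (hπs : Function.Surjective π)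
    (hsemi : ∀ i, π ∘ f i = g i ∘ π)
    (φ : X₂ → ℝ) (hφ : Continuous φ)
    (r : ℝ) (hr0 : 0 < r) (hr1 : r < 1) :
    Pr g φ r ≤ Pr f (φ ∘ π) r := by
  by_cases hne : Nonempty X₁
  · by_cases hm : 0 < m
    · -- main case
      haveI := hne
      haveI hne2 : Nonempty X₂ := Nonempty.map π hne
      obtain ⟨x₀, -, hx₀⟩ := isCompact_univ.exists_isMinOn Set.univ_nonempty hφ.continuousOn
      set C : ℝ := -(φ x₀) with hCdef
      have hC : ∀ y : X₂, -C ≤ φ y := fun y => by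
        simpa [hCdef] using hx₀ (Set.mem_univ y)
      unfold Pr
      refine iSup₂_le fun ε hε => ?_
      have hε' : (0:ℝ) < ε := hε
      obtain ⟨δ, hδ0, hδ⟩ := Metric.uniformContinuous_iff.1
        (CompactSpace.uniformContinuous_of_continuous hπc) ε hε'
      refine le_iSup₂_of_le δ (Set.mem_Ioi.2 hδ0) ?_
      refine Filter.limsup_le_limsup ?_
      filter_upwards [eventually_ge_atTop 1] with n hn
      have hn' : 0 < n := hn
      have hQgpos : 0 < Qn g φ n ε r := by
        haveI hι : Nonempty (Fin m) := ⟨⟨0, hm⟩⟩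
        unfold Qn
        apply mul_pos
        · apply div_pos one_pos
          have hm' : (0:ℝ) < m := by exact_mod_cast hm
          simp only [Fintype.card_fin]
          positivity
        · refine Finset.sum_pos (fun σ _ => ?_) Finset.univ_nonempty
          exact lt_of_lt_of_le (Real.exp_pos (-(((List.ofFn σ).length : ℝ) * C)))
            (Qw_ge hg hC hε' hr0 (by simpa using hn'))
      have hQle : Qn g φ n ε r ≤ Qn f (φ ∘ π) n δ r := by
        unfold Qn
        refine mul_le_mul_of_nonneg_left ?_ (by positivity)
        refine Finset.sum_le_sum fun σ _ => ?_
        exact Qw_le_Qw hf hπs hsemi φ hδ0 hr0 (by simpa using hn')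
          (fun a b hab => hδ hab)
      have hlog := Real.log_le_log hQgpos hQle
      have hfin := mul_le_mul_of_nonneg_left hlog (by positivity : (0:ℝ) ≤ (n:ℝ)⁻¹)
      exact EReal.coe_le_coe_iff.2 hfin
    · -- m = 0
      have hm0 : m = 0 := Nat.eq_zero_of_not_pos hm
      subst hm0
      have hz1 : ∀ ε > (0:ℝ), ∀ᶠ n : ℕ in atTop, Qn g φ n ε r = 0 := by
        intro ε _
        filter_upwards [eventually_ge_atTop 1] with n hn
        have hn0 : n ≠ 0 := Nat.one_le_iff_ne_zero.1 hn
        simp [Qn, hn0, zero_pow]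
      have hz2 : ∀ ε > (0:ℝ), ∀ᶠ n : ℕ in atTop, Qn f (φ ∘ π) n ε r = 0 := by
        intro ε _
        filter_upwards [eventually_ge_atTop 1] with n hn
        have hn0 : n ≠ 0 := Nat.one_le_iff_ne_zero.1 hn
        simp [Qn, hn0, zero_pow]
      have e1 : Pr g φ r = 0 := Pr_eq_zero_aux g φ r hz1
      have e2 : Pr f (φ ∘ π) r = 0 := Pr_eq_zero_aux f (φ ∘ π) r hz2
      rw [e1, e2]
  · -- X₁ empty
    haveI h1 : IsEmpty X₁ := not_nonempty_iff.1 hne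
    haveI h2 : IsEmpty X₂ := by
      by_contra h
      obtain ⟨y⟩ := not_isEmpty_iff.1 h
      obtain ⟨x, -⟩ := hπs y
      exact h1.false x
    have hz1 : ∀ ε > (0:ℝ), ∀ᶠ n : ℕ in atTop, Qn g φ n ε r = 0 := fun ε _ =>
      Eventually.of_forall fun n => by simp [Qn, Qw_empty]
    have hz2 : ∀ ε > (0:ℝ), ∀ᶠ n : ℕ in atTop, Qn f (φ ∘ π) n ε r = 0 := fun ε _ =>
      Eventually.of_forall fun n => by simp [Qn, Qw_empty]
    have e1 : Pr g φ r = 0 := Pr_eq_zero_aux g φ r hz1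
    have e2 : Pr f (φ ∘ π) r = 0 := Pr_eq_zero_aux f (φ ∘ π) r hz2
    rw [e1, e2]

theorem Pr_factor_map
    {X₁ : Type*} [MetricSpace X₁] [CompactSpace X₁]
    {X₂ : Type*} [MetricSpace X₂] [CompactSpace X₂] {m : ℕ}
    (f : Fin m → X₁ → X₁) (hf : ∀ i, Continuous (f i))
    (g : Fin m → X₂ → X₂) (hg : ∀ i, Continuous (g i))
    (π : X₁ → X₂) (hπc : Continuous π) (hπs : Function.Surjective π)
    (hsemi : ∀ i, π ∘ f i = g i ∘ π)
    (φ : X₂ → ℝ) (hφ : Continuous φ)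
    (r : ℝ) (hr0 : 0 < r) (hr1 : r < 1) :
    Pr g φ r ≤ Pr f (φ ∘ π) r ∧
      (IsHomeomorph π → Pr g φ r = Pr f (φ ∘ π) r) := by
  have hle := Pr_key_le f hf g hg π hπc hπs hsemi φ hφ r hr0 hr1
  refine ⟨hle, fun hπh => ?_⟩
  obtain ⟨e, he⟩ := isHomeomorph_iff_exists_homeomorph.1 hπh
  have hsemi' : ∀ i, (⇑e.symm) ∘ g i = f i ∘ ⇑e.symm := by
    intro i
    funext y
    apply e.injective
    have h1 : π (f i (e.symm y)) = g i (π (e.symm y)) := congrFun (hsemi i) (e.symm y)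
    simp only [Function.comp_apply]
    rw [Homeomorph.apply_symm_apply, ← he] at *
    rw [h1, Homeomorph.apply_symm_apply]
  have hle2 := Pr_key_le g hg f hf (⇑e.symm) e.symm.continuous e.symm.surjective hsemi'
    (φ ∘ π) (hφ.comp hπc) r hr0 hr1
  have hcomp : (φ ∘ π) ∘ ⇑e.symm = φ := by
    funext y
    simp [Function.comp, ← he]
  rw [hcomp] at hle2
  exact le_antisymm hle hle2
end
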